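/- arXiv:2005.00125 — 5 statements merged into one kernel-verified Lean document; each statement's English description precedes it below -/
import Mathlib

section
/- Let A be a finite convex set of real numbers. Then |2A − A| ≫ |A|^2, i.e. there is an absolute constant c > 0 such that the set 2A − A = {x₁ + x₂ − x₃ : x₁, x₂, x₃ ∈ A} has at least c·|A|² elements. -/
open Finset Pointwise

/-- The list of consecutive differences of a list of reals. -/
def diffList : List ℝ → List ℝ
  | a :: b :: rest => (b - a) :: diffList (b :: rest)
  | _ => []

/-- `ListKConvex k l` means the increasing list `l` is `k`-convex: `l` is strictly
increasing and its iterated difference lists of orders `1, …, k` are strictly increasing. -/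
def ListKConvex : ℕ → List ℝ → Prop
  | 0, l => l.Chain' (· < ·)
  | k + 1, l => l.Chain' (· < ·) ∧ ListKConvex k (diffList l)

/-- A finite set of reals is `k`-convex if its increasing enumeration is `k`-convex. -/
def FinsetKConvex (k : ℕ) (A : Finset ℝ) : Prop :=
  ListKConvex k (A.sort (· ≤ ·))

/-- `iterSum n A = A + ⋯ + A` (`n` copies), with `iterSum 0 A = {0}`. -/
noncomputable def iterSum : ℕ → Finset ℝ → Finset ℝ
  | 0, _ => {0}
  | n + 1, A => A + iterSum n A

lemma diffList_length (l : List ℝ) : (diffList l).length = l.length - 1 := by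
  match l with
  | [] => rfl
  | [a] => rfl
  | a :: b :: rest =>
    simp [diffList, diffList_length (b :: rest)]

lemma diffList_getD (l : List ℝ) (i : ℕ) (h : i + 1 < l.length) :
    (diffList l).getD i 0 = l.getD (i + 1) 0 - l.getD i 0 := by
  match l, i with
  | a :: b :: rest, 0 => simp [diffList]
  | a :: b :: rest, (i + 1) =>
    have h' : i + 1 < (b :: rest).length := by simpa using Nat.lt_of_succ_lt_succ h
    simpa [diffList] using diffList_getD (b :: rest) i h'

lemma chain'_lt_getD (l : List ℝ) (h : l.Chain' (· < ·)) {i j : ℕ}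
    (hij : i < j) (hj : j < l.length) : l.getD i 0 < l.getD j 0 := by
  rw [List.Chain', List.isChain_iff_pairwise, List.pairwise_iff_get] at h
  have := h ⟨i, lt_trans hij hj⟩ ⟨j, hj⟩ hij
  rwa [List.getD_eq_getElem _ _ (lt_trans hij hj), List.getD_eq_getElem _ _ hj]

/-- If `A` is a finite convex set of reals, then `|2A - A| ≫ |A|²`. -/
theorem stmt0 :
    ∃ c : ℝ, 0 < c ∧ ∀ A : Finset ℝ, FinsetKConvex 1 A →
      c * (A.card : ℝ) ^ 2 ≤ ((iterSum 2 A - iterSum 1 A).card : ℝ) := by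
  refine ⟨1/5, by norm_num, fun A hA => ?_⟩
  set l := A.sort (· ≤ ·) with hl
  set N := A.card with hN
  have hlen : l.length = N := Finset.length_sort _
  obtain ⟨hchain, hdchain⟩ := hA
  set a : ℕ → ℝ := fun i => l.getD i 0 with ha
  -- basic facts
  have hmemA : ∀ i, i < N → a i ∈ A := by
    intro i hi
    rw [← hlen] at hi
    rw [ha]
    simp only
    rw [List.getD_eq_getElem _ _ hi]
    exact (Finset.mem_sort _).1 (List.getElem_mem _)
  have hmono : ∀ i j, i < j → j < N → a i < a j := by
    intro i j hij hj
    exact chain'_lt_getD l hchain hij (by omega)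
  have hmono' : ∀ i j, i ≤ j → j < N → a i ≤ a j := by
    intro i j hij hj
    rcases eq_or_lt_of_le hij with rfl | h
    · exact le_rfl
    · exact le_of_lt (hmono _ _ h hj)
  have hd : ∀ i j, i < j → j + 1 < N → a (i+1) - a i < a (j+1) - a j := by
    intro i j hij hj
    have h1 : i + 1 < l.length := by omega
    have h2 : j + 1 < l.length := by omega
    have := chain'_lt_getD (diffList l) hdchain (i := i) (j := j) hij
      (by rw [diffList_length]; omega)
    rw [diffList_getD l i h1, diffList_getD l j h2] at this
    exact this
  have hdpos : ∀ i, i + 1 < N → 0 < a (i+1) - a i := by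
    intro i hi
    have := hmono i (i+1) (by omega) hi
    linarith
  -- membership in target
  have hmemT : ∀ x y z, x ∈ A → y ∈ A → z ∈ A →
      x + y - z ∈ iterSum 2 A - iterSum 1 A := by
    intro x y z hx hy hz
    have h0 : (0 : ℝ) ∈ iterSum 0 A := by simp [iterSum]
    have h1 : y + 0 ∈ iterSum 1 A := Finset.add_mem_add hy h0
    have h2 : x + (y + 0) ∈ iterSum 2 A := Finset.add_mem_add hx h1
    have h3 : z + 0 ∈ iterSum 1 A := Finset.add_mem_add hz h0
    have := Finset.sub_mem_sub h2 h3
    simpa using this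
  -- case N = 0
  rcases Nat.eq_zero_or_pos N with h0 | hNpos
  · rw [h0]; norm_num
  rcases eq_or_lt_of_le (Nat.succ_le_of_lt hNpos) with h1 | hN2
  · -- N = 1
    rw [← h1]
    have hne : (iterSum 2 A - iterSum 1 A).Nonempty :=
      ⟨_, hmemT (a 0) (a 0) (a 0) (hmemA 0 hNpos) (hmemA 0 hNpos) (hmemA 0 hNpos)⟩
    have : (1 : ℝ) ≤ ((iterSum 2 A - iterSum 1 A).card : ℝ) := by
      exact_mod_cast Finset.card_pos.2 hne
    norm_num
    linarith
  -- N ≥ 2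
  set m := N / 2 with hm
  have hm1 : 1 ≤ m := by omega
  have hmN : m < N := by omega
  set s : Finset (ℕ × ℕ) := (Finset.range m) ×ˢ (Finset.Ico m N) with hs
  set g : ℕ × ℕ → ℝ := fun p => a p.2 + a (p.1 + 1) - a p.1 with hg
  have hmaps : ∀ p ∈ s, g p ∈ iterSum 2 A - iterSum 1 A := by
    intro p hp
    rw [hs, Finset.mem_product, Finset.mem_range, Finset.mem_Ico] at hp
    exact hmemT _ _ _ (hmemA _ hp.2.2) (hmemA _ (by omega)) (hmemA _ (by omega))
  -- key asymmetric claim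
  have key : ∀ i j i' j' : ℕ, i < m → i' < m → m ≤ j → m ≤ j' → j < N → j' < N →
      j < j' → g (i, j) ≠ g (i', j') := by
    intro i j i' j' hi hi' hj hj' hjN hj'N hlt heq
    rw [hg] at heq; simp only at heq
    have h1 : a (j+1) ≤ a j' := hmono' (j+1) j' (by omega) hj'N
    have hdj : a (i+1) - a i < a (j+1) - a j := hd i j (by omega) (by omega)
    have hdi' : 0 < a (i'+1) - a i' := hdpos i' (by omega)
    linarith
  have hinj : Set.InjOn g ↑s := by
    intro p hp q hq heq
    simp only [hs, Finset.coe_product, Set.mem_prod, Finset.coe_range, Set.mem_Iio,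
      Finset.coe_Ico, Set.mem_Ico] at hp hq
    have hp1 := hp.1; have hp2 := hp.2.1; have hp3 := hp.2.2
    have hq1 := hq.1; have hq2 := hq.2.1; have hq3 := hq.2.2
    rcases lt_trichotomy p.2 q.2 with hlt | heq2 | hlt
    · exact absurd heq (by
        have := key p.1 p.2 q.1 q.2 hp1 hq1 hp2 hq2 hp3 hq3 hlt
        simpa using this)
    · -- p.2 = q.2, deduce p.1 = q.1
      have hdd : a (p.1+1) - a p.1 = a (q.1+1) - a q.1 := by
        rw [hg] at heq; simp only at heq
        rw [heq2] at heq
        linarith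
      have h1 : p.1 = q.1 := by
        rcases lt_trichotomy p.1 q.1 with h | h | h
        · have := hd p.1 q.1 h (by omega); linarith
        · exact h
        · have := hd q.1 p.1 h (by omega); linarith
      exact Prod.ext h1 heq2
    · exact absurd heq.symm (by
        have := key q.1 q.2 p.1 p.2 hq1 hp1 hq2 hp2 hq3 hp3 hlt
        simpa using this)
  have hcard : s.card ≤ (iterSum 2 A - iterSum 1 A).card :=
    Finset.card_le_card_of_injOn g hmaps hinj
  have hscard : s.card = m * (N - m) := by
    rw [hs, Finset.card_product, Finset.card_range, Nat.card_Ico]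
  -- arithmetic
  have hq : N = 2 * m ∨ N = 2 * m + 1 := by omega
  have harith : (1/5 : ℝ) * (N : ℝ) ^ 2 ≤ (s.card : ℝ) := by
    rw [hscard]
    have hmn : ((m * (N - m) : ℕ) : ℝ) = (m : ℝ) * ((N : ℝ) - (m : ℝ)) := by
      push_cast [Nat.cast_sub (le_of_lt hmN)]
      ring
    rw [hmn]
    have hm1' : (1 : ℝ) ≤ (m : ℝ) := by exact_mod_cast hm1
    rcases hq with h | h
    · have hNr : (N : ℝ) = 2 * m := by exact_mod_cast h
      rw [hNr]; nlinarith
    · have hNr : (N : ℝ) = 2 * m + 1 := by exact_mod_cast h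
      rw [hNr]; nlinarith
  calc (1/5 : ℝ) * (N : ℝ) ^ 2 ≤ (s.card : ℝ) := harith
    _ ≤ ((iterSum 2 A - iterSum 1 A).card : ℝ) := by exact_mod_cast hcard
end

section
/- Let I be an interval, let f be 1-convex on I, and let A ⊆ I be a finite set of reals with |A| sufficiently large. If |A + A − A| ≤ K|A|, then |2f(A) − f(A)| ≫ |A|² / ( K·(log |A|)³ ), i.e. there is an absolute constant c > 0 such that the set {f(a₁) + f(a₂) − f(a₃) : aᵢ ∈ A} has at least c·|A|²/(K(log |A|)³) elements. -/
open Finset Pointwise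

/-- A function `f` is `k`-convex on `I` if its derivatives `f⁽¹⁾, …, f⁽ᵏ⁺¹⁾` exist and
are nonvanishing at every point of `I`. -/
def FnKConvexOn (k : ℕ) (f : ℝ → ℝ) (I : Set ℝ) : Prop :=
  ∀ i ≤ k, (∀ x ∈ I, DifferentiableAt ℝ (iteratedDeriv i f) x) ∧
    ∀ x ∈ I, iteratedDeriv (i + 1) f x ≠ 0


section Engines
/-- S-side engine: squeezing distinct elements into the gaps of `y`. -/
lemma engineS {m : ℕ} (y : Fin (m+1) → ℝ) (hy : StrictMono y)
    (r : Fin m → Fin m → Prop) [DecidableRel r] (S : Finset ℝ)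
    (hmem : ∀ p q t : Fin (m+1), y p + y q - y t ∈ S)
    (h1 : ∀ i j, r i j → y i.succ - y i.castSucc < y j.succ - y j.castSucc)
    (h2 : ∀ i i' j, r i j → r i' j → i ≠ i' →
      y i.succ - y i.castSucc ≠ y i'.succ - y i'.castSucc) :
    ∑ j : Fin m, (univ.filter (fun i => r i j)).card ≤ S.card := by
  classical
  rw [← Finset.card_sigma]
  apply Finset.card_le_card_of_injOn
    (fun p => y p.1.castSucc + y p.2.succ - y p.2.castSucc)
  · intro p _
    exact hmem _ _ _
  · intro p hp p' hp' heq
    simp only [Finset.coe_sigma, Set.mem_sigma_iff, Finset.mem_coe, Finset.mem_filter,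
      Finset.mem_univ, true_and] at hp hp'
    dsimp only at heq
    have hbound : ∀ q : Σ _ : Fin m, Fin m, r q.2 q.1 →
        y q.1.castSucc < y q.1.castSucc + y q.2.succ - y q.2.castSucc ∧
        y q.1.castSucc + y q.2.succ - y q.2.castSucc < y q.1.succ := by
      intro q hq
      constructor
      · have := hy (Fin.castSucc_lt_succ (i := q.2))
        linarith
      · have := h1 _ _ hq
        linarith
    have hj : p.1 = p'.1 := by
      by_contra hne
      rcases lt_or_gt_of_ne hne with h | h
      · have h1b := (hbound p hp).2
        have h2b := (hbound p' hp').1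
        have hle : y p.1.succ ≤ y p'.1.castSucc :=
          hy.monotone (Fin.succ_le_castSucc_iff.2 h)
        linarith
      · have h1b := (hbound p' hp').2
        have h2b := (hbound p hp).1
        have hle : y p'.1.succ ≤ y p.1.castSucc :=
          hy.monotone (Fin.succ_le_castSucc_iff.2 h)
        linarith
    have hi : p.2 = p'.2 := by
      by_contra hne
      have hcast : y p.1.castSucc = y p'.1.castSucc := by rw [hj]
      exact absurd (by linarith :
          y p.2.succ - y p.2.castSucc = y p'.2.succ - y p'.2.castSucc)
        (h2 _ _ p.1 hp (hj ▸ hp') hne)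
    exact Sigma.ext hj (by rw [hi])

open Classical in
/-- D-side engine: distinct small difference values squeezed into gaps of `x`. -/
lemma engineD {m : ℕ} (x : Fin (m+1) → ℝ) (hx : StrictMono x) (D : Finset ℝ)
    (d : Fin m → ℝ) (hd : ∀ i, d i = x i.succ - x i.castSucc)
    (hmem : ∀ p q t : Fin (m+1), x p + x q - x t ∈ D) :
    ∑ j : Fin m, ((univ.image d).filter (fun v => v ≤ d j)).card ≤ D.card := by
  classical
  have hdfun : d = fun i : Fin m => x i.succ - x i.castSucc := funext hd
  subst hdfun
  show ∑ j : Fin m, ((univ.image (fun i : Fin m => x i.succ - x i.castSucc)).filter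
      (fun v => v ≤ x j.succ - x j.castSucc)).card ≤ D.card
  rw [← Finset.card_sigma]
  apply Finset.card_le_card_of_injOn (fun p => x p.1.castSucc + p.2)
  · intro p hp
    simp only [Finset.mem_coe, Finset.mem_sigma, Finset.mem_filter, Finset.mem_image, Finset.mem_univ,
      true_and] at hp
    obtain ⟨⟨i, hi⟩, _⟩ := hp
    have : x p.1.castSucc + p.2 = x i.succ + x p.1.castSucc - x i.castSucc := by
      rw [← hi]; ring
    simp only [Finset.mem_coe]
    rw [this]
    exact hmem _ _ _
  · intro p hp p' hp' heq
    simp only [Finset.coe_sigma, Set.mem_sigma_iff, Finset.mem_coe, Finset.mem_filter,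
      Finset.mem_image, Finset.mem_univ, true_and] at hp hp'
    dsimp only at heq
    have hbound : ∀ q : Σ _ : Fin m, ℝ,
        ((∃ i : Fin m, x i.succ - x i.castSucc = q.2) ∧ q.2 ≤ x q.1.succ - x q.1.castSucc) →
        x q.1.castSucc < x q.1.castSucc + q.2 ∧ x q.1.castSucc + q.2 ≤ x q.1.succ := by
      rintro q ⟨⟨i, hi⟩, hle⟩
      constructor
      · have := hx (Fin.castSucc_lt_succ (i := i))
        linarith
      · linarith
    have hj : p.1 = p'.1 := by
      by_contra hne
      rcases lt_or_gt_of_ne hne with h | h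
      · have h1b := (hbound p hp).2
        have h2b := (hbound p' hp').1
        have hle : x p.1.succ ≤ x p'.1.castSucc :=
          hx.monotone (Fin.succ_le_castSucc_iff.2 h)
        linarith
      · have h1b := (hbound p' hp').2
        have h2b := (hbound p hp).1
        have hle : x p'.1.succ ≤ x p.1.castSucc :=
          hx.monotone (Fin.succ_le_castSucc_iff.2 h)
        linarith
    have hv : p.2 = p'.2 := by
      have hcast : x p.1.castSucc = x p'.1.castSucc := by rw [hj]
      linarith
    exact Sigma.ext hj (by rw [hv])

end Engines

section Comb
variable {m : ℕ}

lemma card_pairs_eq_sum (r : Fin m → Fin m → Prop) [DecidableRel r] :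
    ((univ ×ˢ univ : Finset (Fin m × Fin m)).filter fun p => r p.1 p.2).card
      = ∑ j : Fin m, (univ.filter fun i => r i j).card := by
  classical
  rw [← Finset.card_sigma]
  apply Finset.card_nbij' (fun p => ⟨p.2, p.1⟩) (fun s => (s.2, s.1))
  · intro p hp
    simp only [Finset.mem_coe, Finset.mem_filter, Finset.mem_product, Finset.mem_univ, true_and] at hp
    simp only [Finset.mem_coe, Finset.mem_sigma, Finset.mem_filter, Finset.mem_univ, true_and]
    exact hp
  · intro s hs
    simp only [Finset.mem_coe, Finset.mem_sigma, Finset.mem_filter, Finset.mem_univ, true_and] at hs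
    simp only [Finset.mem_coe, Finset.mem_filter, Finset.mem_product, Finset.mem_univ, true_and]
    exact hs
  · intro p _; rfl
  · intro s _; rfl

lemma card_lt_eq_card_gt (d : Fin m → ℝ) (T : Finset (Fin m)) :
    ((T ×ˢ T).filter fun p => p.1 < p.2 ∧ d p.1 = d p.2).card
      = ((T ×ˢ T).filter fun p => p.2 < p.1 ∧ d p.1 = d p.2).card := by
  classical
  apply Finset.card_nbij' (fun p => (p.2, p.1)) (fun p => (p.2, p.1))
  · intro p hp
    simp only [Finset.mem_coe, Finset.mem_filter, Finset.mem_product] at hp ⊢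
    exact ⟨⟨hp.1.2, hp.1.1⟩, hp.2.1, hp.2.2.symm⟩
  · intro p hp
    simp only [Finset.mem_coe, Finset.mem_filter, Finset.mem_product] at hp ⊢
    exact ⟨⟨hp.1.2, hp.1.1⟩, hp.2.1, hp.2.2.symm⟩
  · intro p _; rfl
  · intro p _; rfl

lemma card_eq_pairs_split (d : Fin m → ℝ) (T : Finset (Fin m)) :
    ((T ×ˢ T).filter fun p => d p.1 = d p.2).card
      = ((T ×ˢ T).filter fun p => p.1 < p.2 ∧ d p.1 = d p.2).card
        + ((T ×ˢ T).filter fun p => p.2 < p.1 ∧ d p.1 = d p.2).card + T.card := by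
  classical
  have hdiag : ((T ×ˢ T).filter fun p : Fin m × Fin m => p.1 = p.2).card = T.card := by
    apply Finset.card_nbij (fun p => p.1)
    · intro p hp
      simp only [Finset.mem_coe, Finset.mem_filter, Finset.mem_product] at hp
      exact hp.1.1
    · intro p hp p' hp' heq
      simp only [Finset.coe_filter, Finset.mem_product, Set.mem_setOf_eq] at hp hp'
      have heq' : p.1 = p'.1 := heq
      exact Prod.ext heq' (by rw [← hp.2, ← hp'.2, heq'])
    · intro a ha
      simp only [Finset.coe_filter, Set.mem_setOf_eq, Set.mem_image] at ha ⊢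
      exact ⟨(a, a), ⟨by simp [Finset.mem_coe.1 ha], rfl⟩, rfl⟩
  have hdisj1 : Disjoint ((T ×ˢ T).filter fun p => p.1 < p.2 ∧ d p.1 = d p.2)
      ((T ×ˢ T).filter fun p => p.2 < p.1 ∧ d p.1 = d p.2) := by
    rw [Finset.disjoint_left]
    intro p hp hq
    simp only [Finset.mem_filter, Finset.mem_product] at hp hq
    exact absurd hq.2.1 (asymm hp.2.1)
  have hdisj2 : Disjoint (((T ×ˢ T).filter fun p => p.1 < p.2 ∧ d p.1 = d p.2)
        ∪ ((T ×ˢ T).filter fun p => p.2 < p.1 ∧ d p.1 = d p.2))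
      ((T ×ˢ T).filter fun p : Fin m × Fin m => p.1 = p.2) := by
    rw [Finset.disjoint_left]
    intro p hp hq
    simp only [Finset.mem_union, Finset.mem_filter, Finset.mem_product] at hp hq
    rcases hp with ⟨_, h, _⟩ | ⟨_, h, _⟩
    · exact absurd hq.2 (ne_of_lt h)
    · exact absurd hq.2 (ne_of_gt h)
  have hsplit : ((T ×ˢ T).filter fun p => d p.1 = d p.2)
      = (((T ×ˢ T).filter fun p => p.1 < p.2 ∧ d p.1 = d p.2)
        ∪ ((T ×ˢ T).filter fun p => p.2 < p.1 ∧ d p.1 = d p.2))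
        ∪ ((T ×ˢ T).filter fun p : Fin m × Fin m => p.1 = p.2) := by
    ext p
    simp only [Finset.mem_union, Finset.mem_filter, Finset.mem_product]
    constructor
    · rintro ⟨hT, heq⟩
      rcases lt_trichotomy p.1 p.2 with h | h | h
      · exact Or.inl (Or.inl ⟨hT, h, heq⟩)
      · exact Or.inr ⟨hT, h⟩
      · exact Or.inl (Or.inr ⟨hT, h, heq⟩)
    · rintro ((⟨hT, _, heq⟩ | ⟨hT, _, heq⟩) | ⟨hT, heq⟩)
      · exact ⟨hT, heq⟩
      · exact ⟨hT, heq⟩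
      · exact ⟨hT, by rw [heq]⟩
  rw [hsplit, Finset.card_union_of_disjoint hdisj2, Finset.card_union_of_disjoint hdisj1, hdiag]

lemma fiber_cs (d : Fin m → ℝ) (T : Finset (Fin m)) :
    (T.card : ℝ)^2 ≤ ((T.image d).card : ℝ)
      * (((T ×ˢ T).filter fun p => d p.1 = d p.2).card : ℝ) := by
  classical
  set V := T.image d with hV
  have hmaps : ∀ i ∈ T, d i ∈ V := fun i hi => Finset.mem_image_of_mem d hi
  have hcard : T.card = ∑ v ∈ V, (T.filter fun i => d i = v).card :=
    Finset.card_eq_sum_card_fiberwise hmaps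
  have hpairs : ((T ×ˢ T).filter fun p => d p.1 = d p.2).card
      = ∑ v ∈ V, ((T.filter fun i => d i = v).card) ^ 2 := by
    have hmaps2 : ∀ p ∈ (T ×ˢ T).filter (fun p : Fin m × Fin m => d p.1 = d p.2),
        d p.1 ∈ V := by
      intro p hp
      simp only [Finset.mem_filter, Finset.mem_product] at hp
      exact hmaps _ hp.1.1
    rw [Finset.card_eq_sum_card_fiberwise hmaps2]
    apply Finset.sum_congr rfl
    intro v hv
    have hset : ((T ×ˢ T).filter (fun p : Fin m × Fin m => d p.1 = d p.2 ∧ d p.1 = v))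
        = (T.filter fun i => d i = v) ×ˢ (T.filter fun i => d i = v) := by
      ext p
      simp only [Finset.mem_filter, Finset.mem_product]
      constructor
      · rintro ⟨⟨h1, h2⟩, h3, h4⟩
        exact ⟨⟨h1, h4⟩, ⟨h2, by rw [← h3, h4]⟩⟩
      · rintro ⟨⟨h1, h4⟩, ⟨h2, h5⟩⟩
        exact ⟨⟨h1, h2⟩, by rw [h4, h5], h4⟩
    rw [Finset.filter_filter, hset, Finset.card_product, sq]
  rw [hpairs, hcard]
  push_cast
  exact_mod_cast sq_sum_le_card_mul_sum_sq

lemma rank_card_bound {V : Finset ℝ} {T : Finset (Fin m)} (d : Fin m → ℝ)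
    (hV : ∀ i : Fin m, d i ∈ V) (R : ℕ)
    (hrank : ∀ j ∈ T, (V.filter fun v => v ≤ d j).card ≤ R) :
    (T.image d).card ≤ R := by
  classical
  set rank : ℝ → ℕ := fun v => (V.filter fun w => w ≤ v).card with hrankdef
  have hmono : ∀ v, ∀ w ∈ V, v < w → rank v < rank w := by
    intro v w hw hvw
    apply Finset.card_lt_card
    constructor
    · intro x hx
      rw [Finset.mem_filter] at hx ⊢
      exact ⟨hx.1, le_of_lt (lt_of_le_of_lt hx.2 hvw)⟩
    · intro hsub
      have : w ∈ V.filter fun u => u ≤ v := hsub (Finset.mem_filter.2 ⟨hw, le_refl w⟩)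
      exact absurd (Finset.mem_filter.1 this).2 (not_le.2 hvw)
  have hinj : Set.InjOn rank (T.image d) := by
    intro v hv w hw heq
    simp only [Finset.coe_image, Set.mem_image, Finset.mem_coe] at hv hw
    obtain ⟨i, hi, rfl⟩ := hv
    obtain ⟨j, hj, rfl⟩ := hw
    by_contra hne
    rcases lt_or_gt_of_ne hne with h | h
    · exact absurd heq (Nat.ne_of_lt (hmono _ _ (hV j) h))
    · exact absurd heq.symm (Nat.ne_of_lt (hmono _ _ (hV i) h))
  calc (T.image d).card = ((T.image d).image rank).card :=
        (Finset.card_image_of_injOn hinj).symm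
    _ ≤ (Finset.Icc 1 R).card := by
        apply Finset.card_le_card
        intro k hk
        simp only [Finset.mem_image] at hk
        obtain ⟨v, hv, rfl⟩ := hk
        obtain ⟨j, hj, rfl⟩ := hv
        rw [Finset.mem_Icc]
        constructor
        · have : d j ∈ V.filter fun w => w ≤ d j := Finset.mem_filter.2 ⟨hV j, le_refl _⟩
          exact Finset.card_pos.2 ⟨d j, this⟩
        · exact hrank j hj
    _ = R := by rw [Nat.card_Icc]; omega

end Comb

section Analysis

/-- A differentiable function with nonvanishing derivative on `Icc u v` is strictly
monotone or strictly antitone there. -/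
lemma strictMonoOn_or_strictAntiOn_of_deriv_ne_zero {g : ℝ → ℝ} {u v : ℝ}
    (hdiff : ∀ x ∈ Set.Icc u v, DifferentiableAt ℝ g x)
    (hne : ∀ x ∈ Set.Icc u v, deriv g x ≠ 0) :
    StrictMonoOn g (Set.Icc u v) ∨ StrictAntiOn g (Set.Icc u v) := by
  have hcont : ContinuousOn g (Set.Icc u v) :=
    fun x hx => (hdiff x hx).continuousAt.continuousWithinAt
  have hsign : (∀ x ∈ Set.Icc u v, 0 < deriv g x) ∨ (∀ x ∈ Set.Icc u v, deriv g x < 0) := by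
    by_contra hcon
    push_neg at hcon
    obtain ⟨⟨x₁, hx₁, hle₁⟩, ⟨x₂, hx₂, hle₂⟩⟩ := hcon
    have h₁ : deriv g x₁ < 0 := lt_of_le_of_ne hle₁ (hne x₁ hx₁)
    have h₂ : 0 < deriv g x₂ := lt_of_le_of_ne hle₂ (Ne.symm (hne x₂ hx₂))
    have hOC : Set.OrdConnected (Set.Icc u v) := Set.ordConnected_Icc
    have himg : Set.OrdConnected (deriv g '' Set.Icc u v) := hOC.image_deriv hdiff
    have h0 : (0 : ℝ) ∈ deriv g '' Set.Icc u v := by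
      have := himg.out (Set.mem_image_of_mem _ hx₁) (Set.mem_image_of_mem _ hx₂)
      exact this ⟨le_of_lt h₁, le_of_lt h₂⟩
    obtain ⟨x, hx, hx0⟩ := h0
    exact hne x hx hx0
  rcases hsign with h | h
  · left
    apply strictMonoOn_of_deriv_pos (convex_Icc u v) hcont
    intro x hx
    exact h x (interior_subset hx)
  · right
    apply strictAntiOn_of_deriv_neg (convex_Icc u v) hcont
    intro x hx
    exact h x (interior_subset hx)

/-- Equal-length interval slope comparison for a function with strictly monotone
derivative. -/
lemma gap_lt_of_deriv_strictMonoOn {F : ℝ → ℝ} {s : Set ℝ} {u u' w w' : ℝ}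
    (huu : u < u') (hu'w : u' ≤ w) (hww : w < w') (hgap : u' - u = w' - w)
    (hIcc : Set.Icc u w' ⊆ s)
    (hdiff : ∀ x ∈ s, DifferentiableAt ℝ F x)
    (hmono : StrictMonoOn (deriv F) s) :
    F u' - F u < F w' - F w := by
  have huw' : Set.Icc u u' ⊆ Set.Icc u w' := Set.Icc_subset_Icc le_rfl (by linarith)
  have hww' : Set.Icc w w' ⊆ Set.Icc u w' := Set.Icc_subset_Icc (by linarith) le_rfl
  obtain ⟨ξ, hξ, hξs⟩ := exists_deriv_eq_slope F huu
    (fun x hx => (hdiff x (hIcc (huw' hx))).continuousAt.continuousWithinAt)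
    (fun x hx => (hdiff x (hIcc (huw' (Set.Ioo_subset_Icc_self hx)))).differentiableWithinAt)
  obtain ⟨η, hη, hηs⟩ := exists_deriv_eq_slope F hww
    (fun x hx => (hdiff x (hIcc (hww' hx))).continuousAt.continuousWithinAt)
    (fun x hx => (hdiff x (hIcc (hww' (Set.Ioo_subset_Icc_self hx)))).differentiableWithinAt)
  have hξmem : ξ ∈ s := hIcc (huw' (Set.Ioo_subset_Icc_self hξ))
  have hηmem : η ∈ s := hIcc (hww' (Set.Ioo_subset_Icc_self hη))
  have hlt : ξ < η := lt_of_lt_of_le hξ.2 (le_trans hu'w (le_of_lt hη.1))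
  have hd : deriv F ξ < deriv F η := hmono hξmem hηmem hlt
  have hu0 : u' - u ≠ 0 := by linarith
  have hw0 : w' - w ≠ 0 := by linarith
  have h1 : F u' - F u = deriv F ξ * (u' - u) := by
    rw [hξs]; field_simp
  have h2 : F w' - F w = deriv F η * (w' - w) := by
    rw [hηs]; field_simp
  rw [h1, h2, ← hgap]
  have : 0 < u' - u := by linarith
  exact mul_lt_mul_of_pos_right hd this

lemma gap_gt_of_deriv_strictAntiOn {F : ℝ → ℝ} {s : Set ℝ} {u u' w w' : ℝ}
    (huu : u < u') (hu'w : u' ≤ w) (hww : w < w') (hgap : u' - u = w' - w)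
    (hIcc : Set.Icc u w' ⊆ s)
    (hdiff : ∀ x ∈ s, DifferentiableAt ℝ F x)
    (hanti : StrictAntiOn (deriv F) s) :
    F w' - F w < F u' - F u := by
  have key := gap_lt_of_deriv_strictMonoOn (F := fun x => -F x) huu hu'w hww hgap hIcc
    (fun x hx => (hdiff x hx).neg)
    (fun x hx y hy hxy => by
      rw [deriv.fun_neg, deriv.fun_neg]
      exact neg_lt_neg (hanti hx hy hxy))
  linarith

end Analysis

lemma core {m : ℕ} (a : Fin (m+1) → ℝ) (ha : StrictMono a) (F : ℝ → ℝ)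
    (d : Fin m → ℝ) (hd : ∀ i, d i = a i.succ - a i.castSucc)
    (hdiff : ∀ x ∈ Set.Icc (a 0) (a (Fin.last m)), DifferentiableAt ℝ F x)
    (hFmono : StrictMonoOn F (Set.Icc (a 0) (a (Fin.last m))))
    (hF' : StrictMonoOn (deriv F) (Set.Icc (a 0) (a (Fin.last m)))
        ∨ StrictAntiOn (deriv F) (Set.Icc (a 0) (a (Fin.last m))))
    (S : Finset ℝ) (hmem : ∀ p q t : Fin (m+1), F (a p) + F (a q) - F (a t) ∈ S) :
    ((univ ×ˢ univ : Finset (Fin m × Fin m)).filter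
      (fun p => p.1 < p.2 ∧ d p.1 = d p.2)).card ≤ S.card := by
  classical
  set s : Set ℝ := Set.Icc (a 0) (a (Fin.last m)) with hs
  have hmem' : ∀ k : Fin (m+1), a k ∈ s :=
    fun k => ⟨ha.monotone (Fin.zero_le k), ha.monotone (Fin.le_last k)⟩
  set y : Fin (m+1) → ℝ := fun k => F (a k) with hy_def
  have hy : StrictMono y := fun i j h => hFmono (hmem' i) (hmem' j) (ha h)
  have hIccsub : ∀ i j : Fin m, i < j →
      Set.Icc (a i.castSucc) (a j.succ) ⊆ s :=
    fun i j _ => Set.Icc_subset_Icc (ha.monotone (Fin.zero_le _)) (ha.monotone (Fin.le_last _))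
  have hlow : ∀ i : Fin m, a i.castSucc < a i.succ := fun i => ha (Fin.castSucc_lt_succ (i := i))
  have hmid : ∀ i j : Fin m, i < j → a i.succ ≤ a j.castSucc :=
    fun i j h => ha.monotone (Fin.succ_le_castSucc_iff.2 h)
  rcases hF' with hmono | hanti
  · have key : ∀ i j : Fin m, i < j → d i = d j →
        y i.succ - y i.castSucc < y j.succ - y j.castSucc := by
      intro i j hij hdd
      rw [hd i, hd j] at hdd
      exact gap_lt_of_deriv_strictMonoOn (hlow i) (hmid i j hij) (hlow j) hdd
        (hIccsub i j hij) hdiff hmono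
    refine le_trans (le_of_eq (card_pairs_eq_sum (fun i j => i < j ∧ d i = d j))) ?_
    apply engineS y hy _ S (fun p q t => hmem p q t)
    · rintro i j ⟨hij, hdd⟩
      exact key i j hij hdd
    · rintro i i' j ⟨hij, hdd⟩ ⟨hi'j, hdd'⟩ hne
      have hdd2 : d i = d i' := by rw [hdd, hdd']
      rcases lt_or_gt_of_ne hne with h | h
      · exact ne_of_lt (key i i' h hdd2)
      · exact ne_of_gt (key i' i h hdd2.symm)
  · have key : ∀ i j : Fin m, j < i → d i = d j →
        y i.succ - y i.castSucc < y j.succ - y j.castSucc := by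
      intro i j hji hdd
      rw [hd i, hd j] at hdd
      exact gap_gt_of_deriv_strictAntiOn (hlow j) (hmid j i hji) (hlow i) hdd.symm
        (hIccsub j i hji) hdiff hanti
    rw [card_lt_eq_card_gt d univ]
    refine le_trans (le_of_eq (card_pairs_eq_sum (fun i j => j < i ∧ d i = d j))) ?_
    apply engineS y hy _ S (fun p q t => hmem p q t)
    · rintro i j ⟨hji, hdd⟩
      exact key i j hji hdd
    · rintro i i' j ⟨hij, hdd⟩ ⟨hi'j, hdd'⟩ hne
      have hdd2 : d i = d i' := by rw [hdd, hdd']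
      rcases lt_or_gt_of_ne hne with h | h
      · exact ne_of_gt (key i' i h hdd2.symm)
      · exact ne_of_lt (key i i' h hdd2)


lemma mem_comb {B : Finset ℝ} {x y z : ℝ} (hx : x ∈ B) (hy : y ∈ B) (hz : z ∈ B) :
    x + y - z ∈ iterSum 2 B - iterSum 1 B := by
  have h1 : x + (y + 0) ∈ iterSum 2 B := by
    show x + (y + 0) ∈ B + iterSum 1 B
    apply Finset.add_mem_add hx
    show y + 0 ∈ B + iterSum 0 B
    exact Finset.add_mem_add hy (by show (0:ℝ) ∈ ({0} : Finset ℝ); simp)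
  have h2 : z + 0 ∈ iterSum 1 B := by
    show z + 0 ∈ B + iterSum 0 B
    exact Finset.add_mem_add hz (by show (0:ℝ) ∈ ({0} : Finset ℝ); simp)
  have h3 := Finset.sub_mem_sub h1 h2
  have : x + (y + 0) - (z + 0) = x + y - z := by ring
  rwa [this] at h3


lemma arith_main {n K jl ltc ssc L : ℝ} (hn16 : 16 ≤ n) (hK1 : 1 ≤ K)
    (hjl2 : n/2 ≤ jl) (hCS : jl^2 ≤ 4*K*(2*ltc + jl)) (hlt : ltc ≤ ssc) (hsn : n ≤ ssc)
    (hL : 1 ≤ L) (hltc0 : 0 ≤ ltc) :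
    1/64 * n^2 / (K * L^3) ≤ ssc := by
  have hK0 : 0 < K := by linarith
  have hn0 : (0:ℝ) < n := by linarith
  have hL3 : 1 ≤ L^3 := by
    calc (1:ℝ) = 1^3 := by norm_num
      _ ≤ L^3 := pow_le_pow_left₀ (by norm_num) hL 3
  have hL0 : (0:ℝ) < L := by linarith
  have h1 : 1/64 * n^2 / (K * L^3) ≤ n^2/(64*K) := by
    rw [div_le_div_iff₀ (by positivity) (by positivity)]
    nlinarith [mul_nonneg (mul_nonneg (sq_nonneg n) hK0.le)
      (by linarith : (0:ℝ) ≤ L^3 - 1)]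
  refine le_trans h1 ?_
  by_cases hKn : K ≤ n/32
  · refine le_trans ?_ hlt
    rw [div_le_iff₀ (by positivity : (0:ℝ) < 64*K)]
    nlinarith [hCS, mul_nonneg (by linarith : (0:ℝ) ≤ 2*jl - n) (by linarith : (0:ℝ) ≤ jl),
      mul_nonneg (by linarith : (0:ℝ) ≤ n - 32*K) (by linarith : (0:ℝ) ≤ jl),
      mul_nonneg (by linarith : (0:ℝ) ≤ 2*jl - n) hn0.le]
  · push_neg at hKn
    have h2 : n^2/(64*K) ≤ n/2 := by
      rw [div_le_iff₀ (by positivity : (0:ℝ) < 64*K)]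
      nlinarith [mul_lt_mul_of_pos_left hKn hn0]
    linarith

set_option maxHeartbeats 1000000 in
/-- If `f` is `1`-convex on an interval `I` and `A ⊆ I` is a sufficiently large finite set
with `|A + A - A| ≤ K|A|`, then `|2f(A) - f(A)| ≫ |A|² / (K (log |A|)³)`. -/
theorem stmt4 :
    ∃ c : ℝ, 0 < c ∧ ∃ N₀ : ℕ, ∀ (I : Set ℝ) (f : ℝ → ℝ) (A : Finset ℝ) (K : ℝ),
      I.OrdConnected → FnKConvexOn 1 f I → ↑A ⊆ I → N₀ ≤ A.card →
      ((iterSum 2 A - iterSum 1 A).card : ℝ) ≤ K * A.card →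
      c * (A.card : ℝ) ^ 2 / (K * Real.log A.card ^ 3) ≤
        ((iterSum 2 (A.image f) - iterSum 1 (A.image f)).card : ℝ) := by
  classical
  refine ⟨1/64, by norm_num, 16, ?_⟩
  intro I f A K hI hconv hAI hN hDcard
  obtain ⟨m, hm⟩ : ∃ m, A.card = m + 1 := ⟨A.card - 1, by omega⟩
  set n : ℝ := (A.card : ℝ) with hn_def
  have hn16 : (16:ℝ) ≤ n := by rw [hn_def]; exact_mod_cast hN
  have hn0 : 0 < n := by linarith
  -- the sorted enumeration of A
  set e := A.orderIsoOfFin hm with he_def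
  set a : Fin (m+1) → ℝ := fun k => (e k : ℝ) with ha_def
  have ha : StrictMono a := fun i j h => by
    have := e.strictMono h
    exact_mod_cast this
  have haA : ∀ k, a k ∈ A := fun k => (e k).2
  have hsurj : ∀ x ∈ A, ∃ k, a k = x := by
    intro x hx
    exact ⟨e.symm ⟨x, hx⟩, by simp [ha_def]⟩
  -- derivative data
  have h0 := hconv 0 (Nat.zero_le 1)
  have h1 := hconv 1 le_rfl
  have hfdI : ∀ x ∈ I, DifferentiableAt ℝ f x := by
    have := h0.1; simpa only [iteratedDeriv_zero] using this
  have hf'I : ∀ x ∈ I, deriv f x ≠ 0 := by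
    have h02 : ∀ x ∈ I, iteratedDeriv 1 f x ≠ 0 := h0.2
    simpa only [iteratedDeriv_one] using h02
  have hf'dI : ∀ x ∈ I, DifferentiableAt ℝ (deriv f) x := by
    have := h1.1; simpa only [iteratedDeriv_one] using this
  have hf''I : ∀ x ∈ I, deriv (deriv f) x ≠ 0 := by
    have h12 : ∀ x ∈ I, iteratedDeriv 2 f x ≠ 0 := h1.2
    simpa only [iteratedDeriv_succ, iteratedDeriv_one, iteratedDeriv_zero] using h12
  -- restrict to the hull of A
  have hsI : Set.Icc (a 0) (a (Fin.last m)) ⊆ I :=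
    hI.out (hAI (haA 0)) (hAI (haA (Fin.last m)))
  have hfd : ∀ x ∈ Set.Icc (a 0) (a (Fin.last m)), DifferentiableAt ℝ f x :=
    fun x hx => hfdI x (hsI hx)
  have hf'd : ∀ x ∈ Set.Icc (a 0) (a (Fin.last m)), DifferentiableAt ℝ (deriv f) x :=
    fun x hx => hf'dI x (hsI hx)
  have hfm := strictMonoOn_or_strictAntiOn_of_deriv_ne_zero hfd
    (fun x hx => hf'I x (hsI hx))
  have hf'm := strictMonoOn_or_strictAntiOn_of_deriv_ne_zero hf'd
    (fun x hx => hf''I x (hsI hx))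
  have hmemIcc : ∀ k : Fin (m+1), a k ∈ Set.Icc (a 0) (a (Fin.last m)) :=
    fun k => ⟨ha.monotone (Fin.zero_le k), ha.monotone (Fin.le_last k)⟩
  have hAIcc : ∀ x ∈ A, x ∈ Set.Icc (a 0) (a (Fin.last m)) := by
    intro x hx
    obtain ⟨k, rfl⟩ := hsurj x hx
    exact hmemIcc k
  -- injectivity of f on A
  have hinjA : Set.InjOn f A := by
    rcases hfm with hmo | han
    · exact fun x hx y hy hxy => hmo.injOn (hAIcc x hx) (hAIcc y hy) hxy
    · exact fun x hx y hy hxy => han.injOn (hAIcc x hx) (hAIcc y hy) hxy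
  set DD := iterSum 2 A - iterSum 1 A with hDD_def
  set SS := iterSum 2 (A.image f) - iterSum 1 (A.image f) with hSS_def
  have hDmem : ∀ p q t : Fin (m+1), a p + a q - a t ∈ DD :=
    fun p q t => mem_comb (haA p) (haA q) (haA t)
  have hSmem : ∀ p q t : Fin (m+1), f (a p) + f (a q) - f (a t) ∈ SS :=
    fun p q t => mem_comb (Finset.mem_image_of_mem f (haA p))
      (Finset.mem_image_of_mem f (haA q)) (Finset.mem_image_of_mem f (haA t))
  -- |DD| ≥ n hence K ≥ 1
  have hADD : A ⊆ DD := by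
    intro x hx
    have := mem_comb hx (haA 0) (haA 0)
    simpa using this
  have hDn : n ≤ (DD.card : ℝ) := by
    rw [hn_def]; exact_mod_cast Finset.card_le_card hADD
  have hK1 : 1 ≤ K := by nlinarith [hDcard, hDn]
  have hK0 : 0 < K := by linarith
  -- |SS| ≥ n
  have hSn : n ≤ (SS.card : ℝ) := by
    have hBcard : (A.image f).card = A.card := Finset.card_image_of_injOn hinjA
    have hBSS : A.image f ⊆ SS := by
      intro x hx
      have hne : (A.image f).Nonempty := ⟨x, hx⟩
      have := mem_comb hx hx hx
      simpa using this
    have := Finset.card_le_card hBSS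
    rw [hBcard] at this
    rw [hn_def]; exact_mod_cast this
  -- gap function
  set d : Fin m → ℝ := fun i => a i.succ - a i.castSucc with hd_def
  have hd : ∀ i, d i = a i.succ - a i.castSucc := fun i => rfl
  -- S-side bound
  have hP : (((univ ×ˢ univ : Finset (Fin m × Fin m)).filter
      (fun p => p.1 < p.2 ∧ d p.1 = d p.2)).card : ℝ) ≤ (SS.card : ℝ) := by
    rcases hfm with hmo | han
    · have := core a ha f d hd hfd hmo hf'm SS hSmem
      exact_mod_cast this
    · have hFmono : StrictMonoOn (fun x => -f x) (Set.Icc (a 0) (a (Fin.last m))) :=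
        fun x hx y hy hxy => neg_lt_neg (han hx hy hxy)
      have hFdiff : ∀ x ∈ Set.Icc (a 0) (a (Fin.last m)),
          DifferentiableAt ℝ (fun x => -f x) x := fun x hx => (hfd x hx).neg
      have hF' : StrictMonoOn (deriv (fun x => -f x)) (Set.Icc (a 0) (a (Fin.last m)))
          ∨ StrictAntiOn (deriv (fun x => -f x)) (Set.Icc (a 0) (a (Fin.last m))) := by
        rcases hf'm with hmo' | han'
        · right
          intro x hx y hy hxy
          rw [deriv.fun_neg, deriv.fun_neg]
          exact neg_lt_neg (hmo' hx hy hxy)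
        · left
          intro x hx y hy hxy
          rw [deriv.fun_neg, deriv.fun_neg]
          exact neg_lt_neg (han' hx hy hxy)
      have hmemneg : ∀ p q t : Fin (m+1),
          (fun x => -f x) (a p) + (fun x => -f x) (a q) - (fun x => -f x) (a t)
            ∈ SS.image (fun z => -z) := by
        intro p q t
        refine Finset.mem_image.2 ⟨f (a p) + f (a q) - f (a t), hSmem p q t, by ring⟩
      have := core a ha (fun x => -f x) d hd hFdiff hFmono hF'
        (SS.image (fun z => -z)) hmemneg
      have hcard : (SS.image (fun z => -z)).card = SS.card :=
        Finset.card_image_of_injective SS neg_injective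
      rw [hcard] at this
      exact_mod_cast this
  -- D-side bound
  set V : Finset ℝ := univ.image d with hV_def
  have hDsum : ∑ j : Fin m, ((V.filter (fun v => v ≤ d j)).card : ℝ) ≤ K * n := by
    have := engineD a ha DD d hd hDmem
    calc ∑ j : Fin m, ((V.filter (fun v => v ≤ d j)).card : ℝ)
        = ((∑ j : Fin m, (V.filter (fun v => v ≤ d j)).card : ℕ) : ℝ) := by push_cast; rfl
      _ ≤ (DD.card : ℝ) := by exact_mod_cast this
      _ ≤ K * n := hDcard
  -- Markov: most gaps have small rank
  set Jlow : Finset (Fin m) := univ.filter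
    (fun j => ((V.filter (fun v => v ≤ d j)).card : ℝ) ≤ 4*K) with hJlow_def
  set Jhi : Finset (Fin m) := univ.filter
    (fun j => ¬ ((V.filter (fun v => v ≤ d j)).card : ℝ) ≤ 4*K) with hJhi_def
  have hsplitJ : Jlow.card + Jhi.card = m := by
    rw [hJlow_def, hJhi_def, Finset.card_filter_add_card_filter_not]
    simp
  have hJhiK : (Jhi.card : ℝ) * (4*K) ≤ K * n := by
    have h1 : ∀ j ∈ Jhi, 4*K ≤ ((V.filter (fun v => v ≤ d j)).card : ℝ) := by
      intro j hj
      rw [hJhi_def, Finset.mem_filter] at hj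
      linarith [not_le.1 hj.2]
    have h2 := Finset.card_nsmul_le_sum Jhi
      (fun j => ((V.filter (fun v => v ≤ d j)).card : ℝ)) (4*K) h1
    rw [nsmul_eq_mul] at h2
    refine le_trans h2 (le_trans ?_ hDsum)
    apply Finset.sum_le_sum_of_subset_of_nonneg (Finset.subset_univ _)
    intro j _ _
    exact Nat.cast_nonneg _
  have hmn : (m : ℝ) = n - 1 := by
    rw [hn_def]
    have : A.card = m + 1 := hm
    rw [this]
    push_cast
    ring
  have hjl : n/2 ≤ (Jlow.card : ℝ) := by
    have hjh : (Jhi.card : ℝ) ≤ n/4 := by nlinarith [hJhiK, hK0]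
    have hsum : (Jlow.card : ℝ) + (Jhi.card : ℝ) = (m : ℝ) := by
      exact_mod_cast hsplitJ
    rw [hmn] at hsum
    linarith
  have hjln : (Jlow.card : ℝ) ≤ n := by
    have h1 : Jlow.card ≤ m := by
      calc Jlow.card ≤ (univ : Finset (Fin m)).card := Finset.card_le_card (Finset.subset_univ _)
        _ = m := by simp
    have : (Jlow.card : ℝ) ≤ (m : ℝ) := by exact_mod_cast h1
    rw [hmn] at this
    linarith
  -- Cauchy–Schwarz over fibers on Jlow
  have hCS := fiber_cs d Jlow
  -- few distinct gap values on Jlow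
  have hvc : ((Jlow.image d).card : ℝ) ≤ 4*K := by
    have hVmem : ∀ i : Fin m, d i ∈ V := fun i => Finset.mem_image_of_mem d (Finset.mem_univ i)
    have hrank : ∀ j ∈ Jlow, (V.filter (fun v => v ≤ d j)).card ≤ ⌊(4*K : ℝ)⌋₊ := by
      intro j hj
      rw [hJlow_def, Finset.mem_filter] at hj
      exact Nat.le_floor hj.2
    have hb := rank_card_bound d hVmem ⌊(4*K : ℝ)⌋₊ hrank
    calc ((Jlow.image d).card : ℝ) ≤ (⌊(4*K : ℝ)⌋₊ : ℝ) := by exact_mod_cast hb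
      _ ≤ 4*K := Nat.floor_le (by positivity)
  -- split eq-pairs into lt/gt/diag
  have hsplitP := card_eq_pairs_split d Jlow
  have hswap := card_lt_eq_card_gt d Jlow
  set ltc : ℝ := (((Jlow ×ˢ Jlow).filter fun p => p.1 < p.2 ∧ d p.1 = d p.2).card : ℝ)
    with hltc_def
  have heqc : (((Jlow ×ˢ Jlow).filter fun p => d p.1 = d p.2).card : ℝ)
      = 2*ltc + (Jlow.card : ℝ) := by
    rw [hltc_def]
    rw [hswap] at hsplitP
    push_cast [hsplitP]
    rw [← hswap]
    push_cast
    ring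
  -- the lt-pairs over Jlow are among all lt-pairs
  have hltP : ltc ≤ (SS.card : ℝ) := by
    refine le_trans ?_ hP
    rw [hltc_def]
    have hsub : ((Jlow ×ˢ Jlow).filter fun p => p.1 < p.2 ∧ d p.1 = d p.2)
        ⊆ ((univ ×ˢ univ : Finset (Fin m × Fin m)).filter
            fun p => p.1 < p.2 ∧ d p.1 = d p.2) :=
      Finset.monotone_filter_left _
        (Finset.product_subset_product (Finset.subset_univ _) (Finset.subset_univ _))
    exact_mod_cast Finset.card_le_card hsub
  -- numerics
  have hlog1 : 1 ≤ Real.log n := by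
    rw [Real.le_log_iff_exp_le hn0]
    calc Real.exp 1 ≤ 2.7182818286 := le_of_lt Real.exp_one_lt_d9
      _ ≤ 16 := by norm_num
      _ ≤ n := hn16
  have hCS' : ((Jlow.card : ℝ))^2 ≤ 4*K*(2*ltc + (Jlow.card : ℝ)) := by
    calc ((Jlow.card : ℝ))^2 ≤ ((Jlow.image d).card : ℝ)
        * (((Jlow ×ˢ Jlow).filter fun p => d p.1 = d p.2).card : ℝ) := hCS
      _ ≤ 4*K * (((Jlow ×ˢ Jlow).filter fun p => d p.1 = d p.2).card : ℝ) := by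
          apply mul_le_mul_of_nonneg_right hvc (Nat.cast_nonneg _)
      _ = 4*K*(2*ltc + (Jlow.card : ℝ)) := by rw [heqc]
  exact arith_main hn16 hK1 hjl hCS' hltP hSn hlog1 (by rw [hltc_def]; exact Nat.cast_nonneg _)
end

section
/- Let A = {a₁ < a₂ < … < a_N} be a finite set of reals with N sufficiently large. Then there exist a subset H' ⊆ H(A) of size m and a positive integer L such that: (i) Lm ≥ N/(3 log₂ N); (ii) |A + A − A| ≥ Lm²/2; and (iii) for every h ∈ H', L ≤ |A_h| ≤ 2L. -/
open Finset Pointwise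

/-- `H(A)`: the set of consecutive differences `a_{i+1} - a_i` of a finite set of reals. -/
noncomputable def consecDiffs (A : Finset ℝ) : Finset ℝ :=
  (diffList (A.sort (· ≤ ·))).toFinset

/-- `A_h = {a_i ∈ A : a_{i+1} - a_i = h}`: the elements of `A` whose successor in `A` is
obtained by adding `h`. -/
noncomputable def diffFiber (A : Finset ℝ) (h : ℝ) : Finset ℝ :=
  A.filter (fun a => a + h ∈ A ∧ ∀ b ∈ A, a < b → a + h ≤ b)

lemma mem_diffList_of_succ : ∀ {l : List ℝ}, l.Pairwise (· < ·) → ∀ {a b : ℝ},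
    a ∈ l → b ∈ l → a < b → (∀ c ∈ l, a < c → b ≤ c) → b - a ∈ diffList l := by
  intro l
  induction l with
  | nil => intro _ a b ha; simp at ha
  | cons x tl ih =>
    intro hl a b ha hb hab hmin
    rcases tl with _ | ⟨y, tl⟩
    · simp at ha hb; subst ha; subst hb; exact absurd hab (lt_irrefl _)
    · have hsort : (y :: tl).Pairwise (· < ·) := hl.of_cons
      have hxlt : ∀ c ∈ y :: tl, x < c := fun c hc => (List.pairwise_cons.mp hl).1 c hc
      rcases List.mem_cons.mp ha with rfl | ha'
      · -- a = x, so b must be y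
        have hby : b = y := by
          have hbtl : b ∈ y :: tl := by
            rcases List.mem_cons.mp hb with rfl | h; · exact absurd hab (lt_irrefl _)
            · exact h
          have h1 : b ≤ y := hmin y (by simp) (hxlt y (by simp))
          have h2 : y ≤ b := by
            rcases List.mem_cons.mp hbtl with rfl | h; · rfl
            · exact le_of_lt ((List.pairwise_cons.mp hsort).1 b h)
          linarith
        subst hby
        rw [show diffList (a :: b :: tl) = (b - a) :: diffList (b :: tl) from rfl]
        exact List.mem_cons_self
      · -- a ∈ tail
        have hbtl : b ∈ y :: tl := by
          rcases List.mem_cons.mp hb with rfl | h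
          · exact absurd (lt_trans (hxlt a ha') hab) (lt_irrefl _)
          · exact h
        have : b - a ∈ diffList (y :: tl) :=
          ih hsort ha' hbtl hab (fun c hc hac => hmin c (List.mem_cons_of_mem _ hc) hac)
        rw [show diffList (x :: y :: tl) = (y - x) :: diffList (y :: tl) from rfl]
        exact List.mem_cons_of_mem _ this

lemma succ_of_mem_diffList : ∀ {l : List ℝ}, l.Pairwise (· < ·) → ∀ {h : ℝ},
    h ∈ diffList l → ∃ a, a ∈ l ∧ a + h ∈ l ∧ 0 < h ∧ ∀ c ∈ l, a < c → a + h ≤ c := by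
  intro l
  induction l with
  | nil => intro _ h hh; simp [diffList] at hh
  | cons x tl ih =>
    intro hl h hh
    rcases tl with _ | ⟨y, tl⟩
    · simp [diffList] at hh
    · have hsort : (y :: tl).Pairwise (· < ·) := hl.of_cons
      have hxlt : ∀ c ∈ y :: tl, x < c := fun c hc => (List.pairwise_cons.mp hl).1 c hc
      rcases List.mem_cons.mp hh with rfl | hh'
      · refine ⟨x, by simp, ?_, ?_, ?_⟩
        · simp
        · have := hxlt y (by simp); linarith
        · intro c hc hxc
          rcases List.mem_cons.mp hc with rfl | hc'
          · exact absurd hxc (lt_irrefl _)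
          rcases List.mem_cons.mp hc' with rfl | hc''
          · simp
          · have : y < c := (List.pairwise_cons.mp hsort).1 c hc''
            have : x + (y - x) = y := by ring
            linarith [(List.pairwise_cons.mp hsort).1 c hc'']
      · obtain ⟨a, ha, hah, hpos, hmin⟩ := ih hsort hh'
        refine ⟨a, List.mem_cons_of_mem _ ha, List.mem_cons_of_mem _ hah, hpos, ?_⟩
        intro c hc hac
        rcases List.mem_cons.mp hc with rfl | hc'
        · exact absurd (lt_trans (hxlt a ha) hac) (lt_irrefl _)
        · exact hmin c hc' hac

lemma mem_consecDiffs_iff {A : Finset ℝ} {h : ℝ} :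
    h ∈ consecDiffs A ↔ 0 < h ∧ (diffFiber A h).Nonempty := by
  have hsort : (A.sort (· ≤ ·)).Pairwise (· < ·) := (Finset.sortedLT_sort A).pairwise
  constructor
  · intro hh
    rw [consecDiffs, List.mem_toFinset] at hh
    obtain ⟨a, ha, hah, hpos, hmin⟩ := succ_of_mem_diffList hsort hh
    rw [Finset.mem_sort] at ha hah
    refine ⟨hpos, a, ?_⟩
    rw [diffFiber, Finset.mem_filter]
    exact ⟨ha, hah, fun b hb hab => hmin b ((Finset.mem_sort _).mpr hb) hab⟩
  · rintro ⟨hpos, a, ha⟩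
    rw [diffFiber, Finset.mem_filter] at ha
    obtain ⟨haA, hahA, hmin⟩ := ha
    rw [consecDiffs, List.mem_toFinset]
    have := mem_diffList_of_succ hsort ((Finset.mem_sort _).mpr haA)
      ((Finset.mem_sort _).mpr hahA) (by linarith)
      (fun c hc hac => hmin c ((Finset.mem_sort _).mp hc) hac)
    simpa using this

lemma fiber_unique {A : Finset ℝ} {h h' : ℝ} (h0 : 0 < h) (h0' : 0 < h') {a : ℝ}
    (ha : a ∈ diffFiber A h) (ha' : a ∈ diffFiber A h') : h = h' := by
  rw [diffFiber, Finset.mem_filter] at ha ha'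
  obtain ⟨-, h1, h2⟩ := ha
  obtain ⟨-, h1', h2'⟩ := ha'
  have := h2 (a + h') h1' (by linarith)
  have := h2' (a + h) h1 (by linarith)
  linarith

noncomputable def gap (A : Finset ℝ) (a : ℝ) : ℝ :=
  if h : (A.filter (fun b => a < b)).Nonempty then (A.filter (fun b => a < b)).min' h - a else 0

lemma gap_spec {A : Finset ℝ} {a : ℝ} (haA : a ∈ A)
    (hne : (A.filter (fun b => a < b)).Nonempty) :
    0 < gap A a ∧ a ∈ diffFiber A (gap A a) := by
  rw [gap, dif_pos hne]
  set m := (A.filter (fun b => a < b)).min' hne with hm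
  have hmem : m ∈ A.filter (fun b => a < b) := Finset.min'_mem _ hne
  rw [Finset.mem_filter] at hmem
  have hpos : 0 < m - a := by linarith [hmem.2]
  refine ⟨hpos, ?_⟩
  rw [diffFiber, Finset.mem_filter]
  refine ⟨haA, by rw [show a + (m - a) = m by ring]; exact hmem.1, ?_⟩
  intro b hb hab
  rw [show a + (m - a) = m by ring]
  exact Finset.min'_le _ _ (Finset.mem_filter.mpr ⟨hb, hab⟩)

lemma sum_fiber_card (A : Finset ℝ) (hA : A.Nonempty) :
    ∑ h ∈ consecDiffs A, (diffFiber A h).card = A.card - 1 := by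
  set M := A.max' hA with hM
  set B := A.erase M with hB
  have hBa : ∀ a ∈ B, a ∈ A ∧ (A.filter (fun b => a < b)).Nonempty := by
    intro a ha
    rw [hB, Finset.mem_erase] at ha
    refine ⟨ha.2, ⟨M, Finset.mem_filter.mpr ⟨A.max'_mem hA, ?_⟩⟩⟩
    exact lt_of_le_of_ne (Finset.le_max' A a ha.2) ha.1
  have hmaps : ∀ a ∈ B, gap A a ∈ consecDiffs A := by
    intro a ha
    obtain ⟨h1, h2⟩ := hBa a ha
    obtain ⟨hpos, hfib⟩ := gap_spec h1 h2
    exact mem_consecDiffs_iff.mpr ⟨hpos, ⟨a, hfib⟩⟩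
  have hcard := Finset.card_eq_sum_card_fiberwise hmaps
  have hfil : ∀ h ∈ consecDiffs A, B.filter (fun a => gap A a = h) = diffFiber A h := by
    intro h hh
    have hpos : 0 < h := (mem_consecDiffs_iff.mp hh).1
    ext a
    rw [Finset.mem_filter]
    constructor
    · rintro ⟨haB, rfl⟩
      obtain ⟨h1, h2⟩ := hBa a haB
      exact (gap_spec h1 h2).2
    · intro hafib
      have haA : a ∈ A := (Finset.mem_filter.mp hafib).1
      have hahA : a + h ∈ A := (Finset.mem_filter.mp hafib).2.1
      have haB : a ∈ B := by
        rw [hB, Finset.mem_erase]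
        refine ⟨?_, haA⟩
        intro hEq
        have := Finset.le_max' A (a + h) hahA
        rw [← hM, ← hEq] at this
        linarith
      have hne : (A.filter (fun b => a < b)).Nonempty :=
        ⟨a + h, Finset.mem_filter.mpr ⟨hahA, by linarith⟩⟩
      obtain ⟨hgpos, hgfib⟩ := gap_spec haA hne
      exact ⟨haB, fiber_unique hgpos hpos hgfib hafib⟩
  calc ∑ h ∈ consecDiffs A, (diffFiber A h).card
      = ∑ h ∈ consecDiffs A, (B.filter (fun a => gap A a = h)).card :=
        Finset.sum_congr rfl (fun h hh => by rw [hfil h hh])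
    _ = B.card := hcard.symm
    _ = A.card - 1 := by rw [hB, Finset.card_erase_of_mem (A.max'_mem hA)]

lemma sumset_lower (A : Finset ℝ) (C : Finset ℝ) (hC : C ⊆ consecDiffs A) :
    ∑ h ∈ C, (diffFiber A h).card * (C.filter (· ≤ h)).card
      ≤ (iterSum 2 A - iterSum 1 A).card := by
  classical
  set S : Finset ((_ : ℝ) × ℝ × ℝ) :=
    C.sigma (fun h => (diffFiber A h) ×ˢ (C.filter (· ≤ h))) with hS
  have hcardS : S.card = ∑ h ∈ C, (diffFiber A h).card * (C.filter (· ≤ h)).card := by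
    rw [hS, Finset.card_sigma]
    exact Finset.sum_congr rfl (fun h _ => Finset.card_product _ _)
  set φ : ((_ : ℝ) × ℝ × ℝ) → ℝ := fun p => p.2.1 + p.2.2 with hφ
  have hmemS : ∀ p ∈ S, p.1 ∈ C ∧ p.2.1 ∈ diffFiber A p.1 ∧ p.2.2 ∈ C ∧ p.2.2 ≤ p.1 := by
    intro p hp
    rw [hS, Finset.mem_sigma, Finset.mem_product, Finset.mem_filter] at hp
    exact ⟨hp.1, hp.2.1, hp.2.2.1, hp.2.2.2⟩
  have hposC : ∀ h ∈ C, 0 < h := fun h hh => (mem_consecDiffs_iff.mp (hC hh)).1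
  -- maps to
  have hmaps : ∀ p ∈ S, φ p ∈ iterSum 2 A - iterSum 1 A := by
    intro p hp
    obtain ⟨hp1, hp2, hp3, _⟩ := hmemS p hp
    have haA : p.2.1 ∈ A := (Finset.mem_filter.mp hp2).1
    obtain ⟨-, c, hc⟩ := mem_consecDiffs_iff.mp (hC hp3)
    rw [diffFiber, Finset.mem_filter] at hc
    obtain ⟨hcA, hchA, -⟩ := hc
    have h2 : p.2.1 + (c + p.2.2) ∈ iterSum 2 A := by
      rw [show iterSum 2 A = A + (A + ({0} : Finset ℝ)) from rfl]
      refine Finset.add_mem_add haA ?_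
      have : c + p.2.2 + 0 ∈ A + ({0} : Finset ℝ) :=
        Finset.add_mem_add hchA (Finset.mem_singleton_self 0)
      simpa using this
    have h1 : c ∈ iterSum 1 A := by
      rw [show iterSum 1 A = A + ({0} : Finset ℝ) from rfl]
      have : c + 0 ∈ A + ({0} : Finset ℝ) := Finset.add_mem_add hcA (Finset.mem_singleton_self 0)
      simpa using this
    have : p.2.1 + (c + p.2.2) - c ∈ iterSum 2 A - iterSum 1 A := Finset.sub_mem_sub h2 h1
    have heq : p.2.1 + (c + p.2.2) - c = φ p := by rw [hφ]; ring
    rwa [heq] at this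
  -- injectivity
  have hinj : Set.InjOn φ S := by
    intro p hp q hq hpq
    obtain ⟨hp1, hp2, hp3, hp4⟩ := hmemS p (by simpa using hp)
    obtain ⟨hq1, hq2, hq3, hq4⟩ := hmemS q (by simpa using hq)
    rw [diffFiber, Finset.mem_filter] at hp2 hq2
    obtain ⟨haA, hahA, hamin⟩ := hp2
    obtain ⟨hbA, hbhA, hbmin⟩ := hq2
    have hppos := hposC _ hp1
    have hqpos := hposC _ hq1
    have hp3pos := hposC _ hp3
    have hq3pos := hposC _ hq3
    rw [hφ] at hpq
    simp only at hpq
    have hab : p.2.1 = q.2.1 := by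
      by_contra hne
      rcases lt_or_gt_of_ne hne with hlt | hgt
      · have := hamin q.2.1 hbA hlt
        linarith
      · have := hbmin p.2.1 haA hgt
        linarith
    have h23 : p.2.2 = q.2.2 := by rw [hab] at hpq; linarith
    have h1 : p.1 = q.1 := by
      refine fiber_unique (A := A) (a := p.2.1) hppos hqpos ?_ ?_
      · rw [diffFiber, Finset.mem_filter]; exact ⟨haA, hahA, hamin⟩
      · rw [diffFiber, Finset.mem_filter, hab]; exact ⟨hbA, hbhA, hbmin⟩
    rcases p with ⟨p1, p2, p3⟩
    rcases q with ⟨q1, q2, q3⟩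
    simp only at hab h23 h1
    rw [hab, h23, h1]
  rw [← hcardS]
  exact Finset.card_le_card_of_injOn φ hmaps hinj

lemma pairs_lower (C : Finset ℝ) :
    C.card ^ 2 ≤ 2 * ∑ h ∈ C, (C.filter (· ≤ h)).card := by
  classical
  set P := (C ×ˢ C).filter (fun p => p.1 ≤ p.2) with hP
  set Q := (C ×ˢ C).filter (fun p => p.2 ≤ p.1) with hQ
  have hunion : C ×ˢ C ⊆ P ∪ Q := by
    intro p hp
    rw [Finset.mem_union, hP, hQ, Finset.mem_filter, Finset.mem_filter]
    rcases le_total p.1 p.2 with h | h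
    · exact Or.inl ⟨hp, h⟩
    · exact Or.inr ⟨hp, h⟩
  have hQP : Q.card = P.card := by
    refine Finset.card_bij (fun p _ => p.swap) ?_ ?_ ?_
    · intro p hp
      rw [hQ, Finset.mem_filter, Finset.mem_product] at hp
      rw [hP, Finset.mem_filter, Finset.mem_product]
      exact ⟨⟨hp.1.2, hp.1.1⟩, hp.2⟩
    · intro p _ q _ hpq
      exact Prod.swap_injective hpq
    · intro p hp
      rw [hP, Finset.mem_filter, Finset.mem_product] at hp
      exact ⟨p.swap, by rw [hQ, Finset.mem_filter, Finset.mem_product]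
                        exact ⟨⟨hp.1.2, hp.1.1⟩, hp.2⟩, by simp⟩
  have hsum : P.card = ∑ h ∈ C, (C.filter (· ≤ h)).card := by
    have hmaps : ∀ p ∈ P, p.2 ∈ C := by
      intro p hp
      rw [hP, Finset.mem_filter, Finset.mem_product] at hp
      exact hp.1.2
    rw [Finset.card_eq_sum_card_fiberwise hmaps]
    refine Finset.sum_congr rfl (fun h hh => ?_)
    refine Finset.card_bij (fun p _ => p.1) ?_ ?_ ?_
    · intro p hp
      rw [Finset.mem_filter, hP, Finset.mem_filter, Finset.mem_product] at hp
      rw [Finset.mem_filter]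
      exact ⟨hp.1.1.1, hp.2 ▸ hp.1.2⟩
    · intro p hp q hq hpq
      rw [Finset.mem_filter] at hp hq
      ext
      · exact hpq
      · rw [hp.2, hq.2]
    · intro a ha
      rw [Finset.mem_filter] at ha
      refine ⟨(a, h), ?_, rfl⟩
      rw [Finset.mem_filter, hP, Finset.mem_filter, Finset.mem_product]
      exact ⟨⟨⟨ha.1, hh⟩, ha.2⟩, rfl⟩
  have := Finset.card_le_card hunion
  rw [Finset.card_product] at this
  have hle := Finset.card_union_le P Q
  calc C.card ^ 2 = C.card * C.card := sq C.card
    _ ≤ (P ∪ Q).card := this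
    _ ≤ P.card + Q.card := hle
    _ = 2 * ∑ h ∈ C, (C.filter (· ≤ h)).card := by rw [hQP, hsum]; ring


/-- Dyadic pigeonhole lemma: for a sufficiently large finite set `A` of `N` reals there are
`H' ⊆ H(A)` of size `m` and a positive integer `L` with (i) `Lm ≥ N/(3 log₂ N)`,
(ii) `|A + A - A| ≥ Lm²/2`, and (iii) `L ≤ |A_h| ≤ 2L` for every `h ∈ H'`. -/
theorem stmt11 :
    ∃ N₀ : ℕ, ∀ A : Finset ℝ, N₀ ≤ A.card →
      ∃ H' : Finset ℝ, H' ⊆ consecDiffs A ∧ ∃ L : ℕ, 0 < L ∧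
        (A.card : ℝ) / (3 * Real.logb 2 A.card) ≤ (L : ℝ) * H'.card ∧
        (L : ℝ) * (H'.card : ℝ) ^ 2 / 2 ≤ ((iterSum 2 A - iterSum 1 A).card : ℝ) ∧
        ∀ h ∈ H', L ≤ (diffFiber A h).card ∧ (diffFiber A h).card ≤ 2 * L := by
  classical
  refine ⟨1024, fun A hN => ?_⟩
  set N := A.card with hNdef
  have hA : A.Nonempty := Finset.card_pos.mp (by omega)
  have hsumH : ∑ h ∈ consecDiffs A, (diffFiber A h).card = N - 1 := sum_fiber_card A hA
  set K := Nat.log2 N + 1 with hK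
  have hfib1 : ∀ h ∈ consecDiffs A, 1 ≤ (diffFiber A h).card := by
    intro h hh
    exact Finset.card_pos.mpr (mem_consecDiffs_iff.mp hh).2
  have hmaps : ∀ h ∈ consecDiffs A, Nat.log2 (diffFiber A h).card ∈ Finset.range K := by
    intro h hh
    rw [Finset.mem_range, hK]
    have h1 : (diffFiber A h).card ≤ N := Finset.card_le_card (Finset.filter_subset _ _)
    have h2 : Nat.log2 (diffFiber A h).card ≤ Nat.log2 N := by
      rw [Nat.log2_eq_log_two, Nat.log2_eq_log_two]; exact Nat.log_mono_right h1
    omega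
  have htot : ∑ j ∈ Finset.range K,
      ∑ h ∈ (consecDiffs A).filter (fun h => Nat.log2 (diffFiber A h).card = j),
        (diffFiber A h).card = N - 1 := by
    rw [Finset.sum_fiberwise_of_maps_to hmaps, hsumH]
  obtain ⟨j, hjmem, hjmax⟩ := (Finset.range K).exists_max_image
    (fun j => ∑ h ∈ (consecDiffs A).filter (fun h => Nat.log2 (diffFiber A h).card = j),
        (diffFiber A h).card) ⟨0, by simp [hK]⟩
  set C := (consecDiffs A).filter (fun h => Nat.log2 (diffFiber A h).card = j) with hCdef
  set m := C.card with hm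
  set L := 2 ^ j with hL
  have hCsub : C ⊆ consecDiffs A := Finset.filter_subset _ _
  have hLle : ∀ h ∈ C, L ≤ (diffFiber A h).card := by
    intro h hh
    rw [hCdef, Finset.mem_filter] at hh
    have h1 : (diffFiber A h).card ≠ 0 := by have := hfib1 h hh.1; omega
    have := Nat.log2_self_le h1
    rwa [hh.2] at this
  have hle2L : ∀ h ∈ C, (diffFiber A h).card ≤ 2 * L := by
    intro h hh
    rw [hCdef, Finset.mem_filter] at hh
    have := Nat.lt_log2_self (n := (diffFiber A h).card)
    rw [hh.2] at this
    have h2 : (2:ℕ) ^ (j + 1) = 2 * L := by rw [hL, pow_succ]; ring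
    omega
  have hSj : ∑ h ∈ C, (diffFiber A h).card ≤ m * (2 * L) := by
    calc ∑ h ∈ C, (diffFiber A h).card ≤ C.card • (2 * L) :=
          Finset.sum_le_card_nsmul _ _ _ hle2L
      _ = m * (2 * L) := smul_eq_mul _ _
  have key : N - 1 ≤ K * (m * (2 * L)) := by
    have h1 : N - 1 ≤ K * ∑ h ∈ C, (diffFiber A h).card := by
      rw [← htot]
      calc ∑ j' ∈ Finset.range K, ∑ h ∈ (consecDiffs A).filter
            (fun h => Nat.log2 (diffFiber A h).card = j'), (diffFiber A h).card
          ≤ (Finset.range K).card • ∑ h ∈ C, (diffFiber A h).card :=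
            Finset.sum_le_card_nsmul _ _ _ (fun j' hj' => hjmax j' hj')
        _ = K * ∑ h ∈ C, (diffFiber A h).card := by rw [Finset.card_range, smul_eq_mul]
    exact le_trans h1 (Nat.mul_le_mul_left _ hSj)
  have hLpos : 0 < L := Nat.pow_pos (by norm_num)
  have hmpos : 0 < m := by
    by_contra hc
    push_neg at hc
    interval_cases m
    · simp at key; omega
  -- sumset bound
  have hsumset : L * m ^ 2 ≤ 2 * (iterSum 2 A - iterSum 1 A).card := by
    have h1 := sumset_lower A C hCsub
    have h2 := pairs_lower C
    have h3 : L * ∑ h ∈ C, (C.filter (· ≤ h)).card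
        ≤ ∑ h ∈ C, (diffFiber A h).card * (C.filter (· ≤ h)).card := by
      rw [Finset.mul_sum]
      exact Finset.sum_le_sum (fun h hh => Nat.mul_le_mul_right _ (hLle h hh))
    calc L * m ^ 2 ≤ L * (2 * ∑ h ∈ C, (C.filter (· ≤ h)).card) :=
          Nat.mul_le_mul_left _ h2
      _ = 2 * (L * ∑ h ∈ C, (C.filter (· ≤ h)).card) := by ring
      _ ≤ 2 * ∑ h ∈ C, (diffFiber A h).card * (C.filter (· ≤ h)).card :=
          Nat.mul_le_mul_left _ h3
      _ ≤ 2 * (iterSum 2 A - iterSum 1 A).card := Nat.mul_le_mul_left _ h1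
  refine ⟨C, hCsub, L, hLpos, ?_, ?_, fun h hh => ⟨hLle h hh, hle2L h hh⟩⟩
  · -- condition (i)
    set lg := Real.logb 2 (N : ℝ) with hlg
    have hN1024 : (1024 : ℝ) ≤ (N : ℝ) := by exact_mod_cast hN
    have hlg10 : 10 ≤ lg := by
      have h1 : Real.logb 2 ((2:ℝ) ^ (10:ℕ)) = 10 := by
        rw [Real.logb_pow]; simp
      have h2 : ((2:ℝ) ^ (10:ℕ)) = 1024 := by norm_num
      rw [hlg, ← h1, h2]
      exact Real.logb_le_logb_of_le one_lt_two (by norm_num) hN1024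
    have hKlg : (K : ℝ) ≤ lg + 1 := by
      have h1 : ((2:ℝ) ^ (Nat.log2 N)) ≤ (N : ℝ) := by
        exact_mod_cast Nat.log2_self_le (by omega)
      have h2 : Real.logb 2 ((2:ℝ) ^ (Nat.log2 N)) = Nat.log2 N := by
        rw [Real.logb_pow]; simp
      have h3 : (Nat.log2 N : ℝ) ≤ lg := by
        rw [hlg, ← h2]
        exact Real.logb_le_logb_of_le one_lt_two (by positivity) h1
      rw [hK]; push_cast; linarith
    have hLm1 : 1 ≤ (L : ℝ) * (m : ℝ) := by
      have : (1:ℝ) ≤ (L:ℝ) := by exact_mod_cast hLpos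
      have h2 : (1:ℝ) ≤ (m:ℝ) := by exact_mod_cast hmpos
      nlinarith
    have hkey : (N : ℝ) - 1 ≤ (K : ℝ) * ((m : ℝ) * (2 * (L:ℝ))) := by
      have := (Nat.cast_le (α := ℝ)).mpr key
      rw [Nat.cast_sub (by omega : 1 ≤ N)] at this
      push_cast at this ⊢
      linarith
    have hkey2 : (N : ℝ) - 1 ≤ (lg + 1) * (2 * ((L:ℝ) * (m:ℝ))) := by
      have hnn : (0:ℝ) ≤ (m : ℝ) * (2 * (L:ℝ)) := by positivity
      have := mul_le_mul_of_nonneg_right hKlg hnn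
      nlinarith
    rw [div_le_iff₀ (by nlinarith : (0:ℝ) < 3 * lg)]
    have hfin : (lg - 2) * ((L:ℝ) * (m:ℝ)) ≥ (lg - 2) * 1 :=
      mul_le_mul_of_nonneg_left hLm1 (by linarith)
    nlinarith [hkey2, hlg10, hLm1, hfin]
  · -- condition (ii)
    have := (Nat.cast_le (α := ℝ)).mpr hsumset
    push_cast at this
    rw [div_le_iff₀ (by norm_num : (0:ℝ) < 2)]
    calc (L:ℝ) * (m:ℝ)^2 ≤ 2 * ((iterSum 2 A - iterSum 1 A).card : ℝ) := by
          push_cast; nlinarith [this]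
      _ = ((iterSum 2 A - iterSum 1 A).card : ℝ) * 2 := by ring
end

section
/- Let k ≥ 1, let f be k-convex on the interval [a, b], let 1 ≤ j ≤ k, and let h₁, …, h_j > 0 be such that h₁ + ⋯ + h_j < b − a. Then the iterated difference function Δ_{h₁,…,h_j} f is strictly monotone on [a, b − (h₁ + ⋯ + h_j)]. -/
/-- The iterated difference operator: `iterDiff f [] = f` and
`iterDiff f (h :: hs) = Δ_h (iterDiff f hs)`, where `(Δ_h g)(x) = g(x + h) - g(x)`. -/
def iterDiff (f : ℝ → ℝ) : List ℝ → ℝ → ℝ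
  | [] => f
  | h :: hs => fun x => iterDiff f hs (x + h) - iterDiff f hs x

lemma FnKConvexOn.deriv' {m : ℕ} {g : ℝ → ℝ} {I : Set ℝ} (hg : FnKConvexOn (m + 1) g I) :
    FnKConvexOn m (deriv g) I := by
  intro i hi
  obtain ⟨h1, h2⟩ := hg (i + 1) (by omega)
  constructor
  · intro x hx
    have : iteratedDeriv i (deriv g) = iteratedDeriv (i + 1) g := iteratedDeriv_succ'.symm
    rw [this]; exact h1 x hx
  · intro x hx
    have : iteratedDeriv (i + 1) (deriv g) = iteratedDeriv (i + 2) g :=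
      iteratedDeriv_succ'.symm
    rw [this]; exact h2 x hx

lemma iterDiff_hasDerivAt (g : ℝ → ℝ) (hs : List ℝ) (hpos : ∀ h ∈ hs, (0 : ℝ) ≤ h) (x : ℝ)
    (hd : ∀ y ∈ Set.Icc x (x + hs.sum), DifferentiableAt ℝ g y) :
    HasDerivAt (iterDiff g hs) (iterDiff (deriv g) hs x) x := by
  induction hs generalizing x with
  | nil =>
    simpa [iterDiff] using (hd x (by simp)).hasDerivAt
  | cons h t ih =>
    have hh : 0 ≤ h := hpos h (List.mem_cons_self)
    have htpos : ∀ h' ∈ t, (0 : ℝ) ≤ h' := fun h' hh' => hpos h' (List.mem_cons_of_mem _ hh')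
    have hts : 0 ≤ t.sum := List.sum_nonneg htpos
    have hsc : (h :: t).sum = h + t.sum := List.sum_cons
    have h1 : HasDerivAt (iterDiff g t) (iterDiff (deriv g) t (x + h)) (x + h) := by
      refine ih htpos (x + h) (fun y hy => hd y ?_)
      obtain ⟨hy1, hy2⟩ := hy
      exact ⟨by linarith, by rw [hsc]; linarith⟩
    have h2 : HasDerivAt (iterDiff g t) (iterDiff (deriv g) t x) x := by
      refine ih htpos x (fun y hy => hd y ?_)
      obtain ⟨hy1, hy2⟩ := hy
      exact ⟨by linarith, by rw [hsc]; linarith⟩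
    have h3 : HasDerivAt (fun y => iterDiff g t (y + h)) (iterDiff (deriv g) t (x + h)) x := by
      have := h1.comp x ((hasDerivAt_id x).add_const h)
      simpa [Function.comp_def] using this
    simpa [iterDiff, Pi.sub_def] using h3.sub h2

lemma sign_of_shift (a b h s : ℝ) (hh : 0 < h) (F : ℝ → ℝ)
    (hm : StrictMonoOn F (Set.Icc a (b - s)) ∨ StrictAntiOn F (Set.Icc a (b - s))) :
    (∀ x ∈ Set.Icc a (b - (h + s)), 0 < F (x + h) - F x) ∨
      (∀ x ∈ Set.Icc a (b - (h + s)), F (x + h) - F x < 0) := by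
  have mem : ∀ x ∈ Set.Icc a (b - (h + s)),
      x ∈ Set.Icc a (b - s) ∧ x + h ∈ Set.Icc a (b - s) := by
    intro x hx
    obtain ⟨h1, h2⟩ := hx
    exact ⟨⟨h1, by linarith⟩, ⟨by linarith, by linarith⟩⟩
  rcases hm with hm | hm
  · left; intro x hx
    obtain ⟨m1, m2⟩ := mem x hx
    have := hm m1 m2 (by linarith)
    linarith
  · right; intro x hx
    obtain ⟨m1, m2⟩ := mem x hx
    have := hm m1 m2 (by linarith)
    linarith

/-- If `g` is differentiable on `[a,b]` with nonvanishing derivative, it is strictly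
monotone or strictly antitone on `[a,b]` (Darboux + mean value). -/
lemma strictMono_or_anti_of_deriv_ne_zero (a b : ℝ) (g : ℝ → ℝ)
    (hdiff : ∀ x ∈ Set.Icc a b, DifferentiableAt ℝ g x)
    (hne : ∀ x ∈ Set.Icc a b, deriv g x ≠ 0) :
    StrictMonoOn g (Set.Icc a b) ∨ StrictAntiOn g (Set.Icc a b) := by
  have hc : ContinuousOn g (Set.Icc a b) :=
    fun x hx => (hdiff x hx).continuousAt.continuousWithinAt
  have hD : (∀ x ∈ Set.Icc a b, deriv g x < 0) ∨ ∀ x ∈ Set.Icc a b, 0 < deriv g x :=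
    hasDerivWithinAt_forall_lt_or_forall_gt_of_forall_ne (convex_Icc a b)
      (fun x hx => (hdiff x hx).hasDerivAt.hasDerivWithinAt) hne
  rcases hD with hD | hD
  · exact Or.inr (strictAntiOn_of_deriv_neg (convex_Icc a b) hc
      (fun x hx => hD x (interior_subset hx)))
  · exact Or.inl (strictMonoOn_of_deriv_pos (convex_Icc a b) hc
      (fun x hx => hD x (interior_subset hx)))

/-- From constant sign of `iterDiff (deriv g) hs` deduce strict monotonicity of
`iterDiff g hs`. -/
lemma mono_of_sign (a b : ℝ) (hs : List ℝ) (hpos : ∀ h ∈ hs, (0 : ℝ) < h)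
    (hsum : hs.sum ≤ b - a) (g : ℝ → ℝ)
    (hdiff : ∀ x ∈ Set.Icc a b, DifferentiableAt ℝ g x)
    (hsign : (∀ x ∈ Set.Icc a (b - hs.sum), 0 < iterDiff (deriv g) hs x) ∨
      ∀ x ∈ Set.Icc a (b - hs.sum), iterDiff (deriv g) hs x < 0) :
    StrictMonoOn (iterDiff g hs) (Set.Icc a (b - hs.sum)) ∨
      StrictAntiOn (iterDiff g hs) (Set.Icc a (b - hs.sum)) := by
  have hnn : ∀ h ∈ hs, (0 : ℝ) ≤ h := fun h hh => (hpos h hh).le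
  have hda : ∀ x ∈ Set.Icc a (b - hs.sum),
      HasDerivAt (iterDiff g hs) (iterDiff (deriv g) hs x) x := by
    intro x hx
    obtain ⟨hx1, hx2⟩ := hx
    refine iterDiff_hasDerivAt g hs hnn x (fun y hy => hdiff y ?_)
    obtain ⟨hy1, hy2⟩ := hy
    exact ⟨by linarith, by linarith⟩
  have hc : ContinuousOn (iterDiff g hs) (Set.Icc a (b - hs.sum)) :=
    fun x hx => ((hda x hx).differentiableAt).continuousAt.continuousWithinAt
  rcases hsign with hsign | hsign
  · refine Or.inl (strictMonoOn_of_deriv_pos (convex_Icc _ _) hc (fun x hx => ?_))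
    have hx' := interior_subset hx
    rw [(hda x hx').deriv]
    exact hsign x hx'
  · refine Or.inr (strictAntiOn_of_deriv_neg (convex_Icc _ _) hc (fun x hx => ?_))
    have hx' := interior_subset hx
    rw [(hda x hx').deriv]
    exact hsign x hx'

lemma key (a b : ℝ) : ∀ n : ℕ, ∀ hs : List ℝ, hs.length = n + 1 →
    (∀ h ∈ hs, (0 : ℝ) < h) → hs.sum < b - a →
    (∀ g : ℝ → ℝ, FnKConvexOn n g (Set.Icc a b) →
      (∀ x ∈ Set.Icc a (b - hs.sum), 0 < iterDiff g hs x) ∨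
        ∀ x ∈ Set.Icc a (b - hs.sum), iterDiff g hs x < 0) ∧
    (∀ g : ℝ → ℝ, FnKConvexOn (n + 1) g (Set.Icc a b) →
      StrictMonoOn (iterDiff g hs) (Set.Icc a (b - hs.sum)) ∨
        StrictAntiOn (iterDiff g hs) (Set.Icc a (b - hs.sum))) := by
  intro n
  induction n with
  | zero =>
    intro hs hlen hpos hsum
    obtain ⟨h, rfl⟩ := List.length_eq_one_iff.mp hlen
    have hh : 0 < h := hpos h (List.mem_singleton_self _)
    have hS : ∀ g : ℝ → ℝ, FnKConvexOn 0 g (Set.Icc a b) →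
        (∀ x ∈ Set.Icc a (b - [h].sum), 0 < iterDiff g [h] x) ∨
          ∀ x ∈ Set.Icc a (b - [h].sum), iterDiff g [h] x < 0 := by
      intro g hg
      obtain ⟨hd0, hn0⟩ := hg 0 le_rfl
      have hdiff : ∀ x ∈ Set.Icc a b, DifferentiableAt ℝ g x := by
        simpa [iteratedDeriv_zero] using hd0
      have hne : ∀ x ∈ Set.Icc a b, deriv g x ≠ 0 := by
        simpa [iteratedDeriv_one] using hn0
      have hm := strictMono_or_anti_of_deriv_ne_zero a b g hdiff hne
      have hm' : StrictMonoOn g (Set.Icc a (b - 0)) ∨ StrictAntiOn g (Set.Icc a (b - 0)) := by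
        simpa using hm
      have := sign_of_shift a b h 0 hh g hm'
      simpa [iterDiff] using this
    refine ⟨hS, fun g hg => ?_⟩
    have hdg : FnKConvexOn 0 (deriv g) (Set.Icc a b) := hg.deriv'
    have hdiff : ∀ x ∈ Set.Icc a b, DifferentiableAt ℝ g x := by
      simpa [iteratedDeriv_zero] using (hg 0 (by omega)).1
    exact mono_of_sign a b [h] hpos hsum.le g hdiff (hS (deriv g) hdg)
  | succ n ih =>
    intro hs hlen hpos hsum
    obtain ⟨h, t, rfl⟩ : ∃ h t, hs = h :: t := by
      cases hs with
      | nil => simp at hlen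
      | cons h t => exact ⟨h, t, rfl⟩
    have hh : 0 < h := hpos h (List.mem_cons_self)
    have htlen : t.length = n + 1 := by simpa using hlen
    have htpos : ∀ h' ∈ t, (0 : ℝ) < h' := fun h' hh' => hpos h' (List.mem_cons_of_mem _ hh')
    have htsum : t.sum < b - a := by
      have : (h :: t).sum = h + t.sum := List.sum_cons
      linarith [this ▸ hsum]
    have hS : ∀ g : ℝ → ℝ, FnKConvexOn (n + 1) g (Set.Icc a b) →
        (∀ x ∈ Set.Icc a (b - (h :: t).sum), 0 < iterDiff g (h :: t) x) ∨
          ∀ x ∈ Set.Icc a (b - (h :: t).sum), iterDiff g (h :: t) x < 0 := by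
      intro g hg
      have hm := (ih t htlen htpos htsum).2 g hg
      have := sign_of_shift a b h t.sum hh (iterDiff g t) hm
      simpa [iterDiff, List.sum_cons] using this
    refine ⟨hS, fun g hg => ?_⟩
    have hdg : FnKConvexOn (n + 1) (deriv g) (Set.Icc a b) := hg.deriv'
    have hdiff : ∀ x ∈ Set.Icc a b, DifferentiableAt ℝ g x := by
      simpa [iteratedDeriv_zero] using (hg 0 (by omega)).1
    exact mono_of_sign a b (h :: t) hpos hsum.le g hdiff (hS (deriv g) hdg)

/-- If `f` is `k`-convex on `[a, b]` (`k ≥ 1`), `1 ≤ j ≤ k`, and `h₁, …, h_j > 0` with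
`h₁ + ⋯ + h_j < b - a`, then the iterated difference `Δ_{h₁,…,h_j} f` is strictly monotone
on `[a, b - (h₁ + ⋯ + h_j)]`. -/
theorem stmt13 (k : ℕ) (hk : 1 ≤ k) (f : ℝ → ℝ) (a b : ℝ)
    (hf : FnKConvexOn k f (Set.Icc a b)) (hs : List ℝ)
    (hlen : 1 ≤ hs.length) (hjk : hs.length ≤ k)
    (hpos : ∀ h ∈ hs, (0 : ℝ) < h) (hsum : hs.sum < b - a) :
    StrictMonoOn (iterDiff f hs) (Set.Icc a (b - hs.sum)) ∨
      StrictAntiOn (iterDiff f hs) (Set.Icc a (b - hs.sum)) := by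
  have hf' : FnKConvexOn hs.length f (Set.Icc a b) :=
    fun i hi => hf i (le_trans hi hjk)
  have hlen' : hs.length = (hs.length - 1) + 1 := by omega
  have hf'' : FnKConvexOn ((hs.length - 1) + 1) f (Set.Icc a b) := hlen' ▸ hf'
  exact (key a b (hs.length - 1) hs hlen' hpos hsum).2 f hf''
end

section
/- Let A = {a₁ < a₂ < … < a_N} be a finite set of reals, and for 1 ≤ j ≤ N−1 let i(j) = 1 + |{h ∈ H(A) : h < a_{j+1} − a_j}|. Then |A + A − A| ≥ Σ_{j=1}^{N−1} i(j); in fact, for each j the interval [a_j, a_{j+1}) contains at least i(j) elements of A + A − A. -/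
open Finset Pointwise

lemma mem_diffList : ∀ (l : List ℝ) (h : ℝ),
    h ∈ diffList l ↔ ∃ i : ℕ, ∃ hi : i + 1 < l.length, h = l[i+1] - l[i]
  | [], h => by simp [diffList]
  | [a], h => by simp [diffList]
  | a :: b :: rest, h => by
    rw [diffList, List.mem_cons, mem_diffList (b :: rest) h]
    constructor
    · rintro (rfl | ⟨i, hi, rfl⟩)
      · exact ⟨0, by simp, by simp⟩
      · exact ⟨i + 1, by simpa using hi, by simp⟩
    · rintro ⟨i, hi, rfl⟩
      match i with
      | 0 => simp
      | i + 1 =>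
        right
        exact ⟨i, by simpa using hi, by simp⟩

lemma iterSum_two_sub_one (A : Finset ℝ) : iterSum 2 A - iterSum 1 A = (A + A) - A := by
  have h1 : iterSum 1 A = A := by
    rw [show iterSum 1 A = A + iterSum 0 A from rfl, show iterSum 0 A = {0} from rfl]
    ext x; simp [Finset.mem_add]
  rw [show iterSum 2 A = A + iterSum 1 A from rfl, h1]

lemma mem_B {A : Finset ℝ} {p q r : ℝ} (hp : p ∈ A) (hq : q ∈ A) (hr : r ∈ A) :
    p + q - r ∈ iterSum 2 A - iterSum 1 A := by
  rw [iterSum_two_sub_one, Finset.mem_sub]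
  exact ⟨p + q, Finset.mem_add.2 ⟨p, hp, q, hq, rfl⟩, r, hr, rfl⟩

lemma consecDiffs_spec {A : Finset ℝ} {h : ℝ} (hh : h ∈ consecDiffs A) :
    0 < h ∧ ∃ p ∈ A, ∃ q ∈ A, h = p - q := by
  rw [consecDiffs, List.mem_toFinset, mem_diffList] at hh
  obtain ⟨i, hi, rfl⟩ := hh
  have hs := (Finset.sortedLT_sort A).strictMono_get
  have hlt : (A.sort (· ≤ ·))[i] < (A.sort (· ≤ ·))[i+1] := by
    have := hs (show (⟨i, by omega⟩ : Fin _) < ⟨i+1, hi⟩ from by simp)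
    simpa using this
  exact ⟨by linarith,
    _, (Finset.mem_sort _).1 (List.getElem_mem _),
    _, (Finset.mem_sort _).1 (List.getElem_mem _), rfl⟩

lemma key_s17 (A : Finset ℝ) {j : ℕ} (hj : j < A.card - 1) :
    1 + ((consecDiffs A).filter
        (fun h => h < (A.sort (· ≤ ·)).getD (j + 1) 0 - (A.sort (· ≤ ·)).getD j 0)).card ≤
      ((iterSum 2 A - iterSum 1 A).filter
        (fun x => (A.sort (· ≤ ·)).getD j 0 ≤ x ∧
          x < (A.sort (· ≤ ·)).getD (j + 1) 0)).card := by
  set L := A.sort (· ≤ ·) with hL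
  have hlen : L.length = A.card := Finset.length_sort _
  have hj1 : j + 1 < L.length := by omega
  have hjl : j < L.length := by omega
  set aj := L.getD j 0 with haj
  set aj1 := L.getD (j + 1) 0 with haj1
  have hajE : aj = L[j] := List.getD_eq_getElem L 0 hjl
  have haj1E : aj1 = L[j+1] := List.getD_eq_getElem L 0 hj1
  have hmono := (Finset.sortedLT_sort A).strictMono_get
  have hd : aj < aj1 := by
    rw [hajE, haj1E]
    have := hmono (show (⟨j, hjl⟩ : Fin L.length) < ⟨j+1, hj1⟩ from by simp)
    simpa using this
  have hajA : aj ∈ A := by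
    rw [hajE]; exact (Finset.mem_sort _).1 (List.getElem_mem _)
  set F := (consecDiffs A).filter (fun h => h < aj1 - aj) with hF
  set S := (insert (0:ℝ) F).image (fun h => aj + h) with hS
  have hcard : S.card = 1 + F.card := by
    rw [hS, Finset.card_image_of_injective _ (add_right_injective aj),
      Finset.card_insert_of_notMem, add_comm]
    intro h0
    have := (consecDiffs_spec (Finset.mem_filter.1 h0).1).1
    linarith
  rw [← hcard]
  apply Finset.card_le_card
  intro x hx
  simp only [hS, Finset.mem_image, Finset.mem_insert] at hx
  obtain ⟨h, hcase, rfl⟩ := hx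
  rcases hcase with rfl | hmem
  · rw [add_zero]
    refine Finset.mem_filter.2 ⟨?_, le_refl _, hd⟩
    have := mem_B hajA hajA hajA
    simpa using this
  · obtain ⟨hhc, hhd⟩ := Finset.mem_filter.1 hmem
    obtain ⟨hpos, p, hp, q, hq, rfl⟩ := consecDiffs_spec hhc
    refine Finset.mem_filter.2 ⟨?_, by linarith, by linarith⟩
    have : aj + (p - q) = aj + p - q := by ring
    rw [this]
    exact mem_B hajA hp hq

/-- Let `A = {a₁ < … < a_N}` and `i(j) = 1 + |{h ∈ H(A) : h < a_{j+1} - a_j}|`. Then for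
each `j` the interval `[a_j, a_{j+1})` contains at least `i(j)` elements of `A + A - A`;
consequently `|A + A - A| ≥ Σ_{j=1}^{N-1} i(j)`. Here indices are shifted to start at `0`,
 so `a_j` is `(A.sort (· ≤ ·)).getD (j-1) 0` and `j` runs over `0, …, N-2`. -/
theorem stmt17 (A : Finset ℝ) :
    (∀ j < A.card - 1,
      1 + ((consecDiffs A).filter
          (fun h => h < (A.sort (· ≤ ·)).getD (j + 1) 0 - (A.sort (· ≤ ·)).getD j 0)).card ≤
        ((iterSum 2 A - iterSum 1 A).filter
          (fun x => (A.sort (· ≤ ·)).getD j 0 ≤ x ∧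
            x < (A.sort (· ≤ ·)).getD (j + 1) 0)).card) ∧
    ∑ j ∈ Finset.range (A.card - 1),
        (1 + ((consecDiffs A).filter
          (fun h => h < (A.sort (· ≤ ·)).getD (j + 1) 0 - (A.sort (· ≤ ·)).getD j 0)).card) ≤
      (iterSum 2 A - iterSum 1 A).card := by
  refine ⟨fun j hj => key_s17 A hj, ?_⟩
  set L := A.sort (· ≤ ·) with hL
  have hlen : L.length = A.card := Finset.length_sort _
  set B := iterSum 2 A - iterSum 1 A with hB
  set f : ℕ → Finset ℝ := fun j =>
    B.filter (fun x => L.getD j 0 ≤ x ∧ x < L.getD (j + 1) 0) with hf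
  have hmono := (Finset.sortedLT_sort A).strictMono_get
  have aux : ∀ i j : ℕ, i < j → j < A.card - 1 → Disjoint (f i) (f j) := by
    intro i j hij hjc
    rw [Finset.disjoint_left]
    intro x hxi hxj
    have h1 := (Finset.mem_filter.1 hxi).2.2
    have h2 := (Finset.mem_filter.1 hxj).2.1
    have hi1 : i + 1 < L.length := by omega
    have hjl : j < L.length := by omega
    have hle : L.getD (i + 1) 0 ≤ L.getD j 0 := by
      rw [List.getD_eq_getElem L 0 hi1, List.getD_eq_getElem L 0 hjl]
      have := hmono.monotone
        (show (⟨i+1, hi1⟩ : Fin L.length) ≤ ⟨j, hjl⟩ from by simp [Fin.le_def]; omega)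
      simpa using this
    linarith
  have hdisj : ∀ i ∈ Finset.range (A.card - 1), ∀ j ∈ Finset.range (A.card - 1),
      i ≠ j → Disjoint (f i) (f j) := by
    intro i hi j hj hij
    rcases hij.lt_or_gt with h | h
    · exact aux i j h (Finset.mem_range.1 hj)
    · exact (aux j i h (Finset.mem_range.1 hi)).symm
  calc ∑ j ∈ Finset.range (A.card - 1),
        (1 + ((consecDiffs A).filter
          (fun h => h < L.getD (j + 1) 0 - L.getD j 0)).card)
      ≤ ∑ j ∈ Finset.range (A.card - 1), (f j).card :=
        Finset.sum_le_sum fun j hj => key_s17 A (Finset.mem_range.1 hj)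
    _ = ((Finset.range (A.card - 1)).biUnion f).card := (Finset.card_biUnion hdisj).symm
    _ ≤ B.card := Finset.card_le_card
        (Finset.biUnion_subset.2 fun j _ => Finset.filter_subset _ _)
end
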